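/- arXiv:quant-ph/0505048 — 6 statements merged into one kernel-verified Lean document; each statement's English description precedes it below -/
import Mathlib

section
/- Let Φ be a generalized depolarizing channel on d×d complex matrices, Φ(ρ) = Σ_k a_k V_k ρ V_k† + (1−a)(Tr ρ)(1/d)I, and suppose all the unitary matrices V_k have a common unit eigenvector ψ (i.e., for every k there is a scalar c_k with V_k ψ = c_k ψ). Then for every p ≥ 1, ‖Φ(|ψ⟩⟨ψ|)‖_p = ν_p(Φ) = ν_p(Γ_a), where Γ_a is the depolarizing channel with the same parameter a. -/
open scoped BigOperators Matrix Kronecker ComplexOrder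

noncomputable section

namespace GenDep

/-- A density matrix: positive semidefinite with trace 1. -/
def IsDensityMatrix {ι : Type*} [Fintype ι] (ρ : Matrix ι ι ℂ) : Prop :=
  ρ.PosSemidef ∧ ρ.trace = 1

/-- A unitary matrix. -/
def IsUnitary {ι : Type*} [Fintype ι] [DecidableEq ι] (V : Matrix ι ι ℂ) : Prop :=
  Vᴴ * V = 1 ∧ V * Vᴴ = 1

/-- The depolarizing channel with parameter `a` on `d × d` matrices. -/
def depolarizing (d : ℕ) (a : ℝ) (ρ : Matrix (Fin d) (Fin d) ℂ) :
    Matrix (Fin d) (Fin d) ℂ :=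
  (a : ℂ) • ρ + ((((1 : ℝ) - a : ℝ) : ℂ) / d * ρ.trace) • 1

/-- The Schatten `p`-norm, `(Tr ((AᴴA)^(p/2)))^(1/p)`, computed via the
eigenvalues of `AᴴA`. -/
def schattenNorm {ι : Type*} [Fintype ι] [DecidableEq ι] (p : ℝ) (A : Matrix ι ι ℂ) : ℝ :=
  (∑ i, ((Matrix.isHermitian_conjTranspose_mul_self A).eigenvalues i) ^ (p / 2)) ^ (1 / p)

/-- The maximal output `p`-norm of a map on matrices. -/
def maxOutputPNorm {ι : Type*} [Fintype ι] [DecidableEq ι] (p : ℝ)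
    (Φ : Matrix ι ι ℂ → Matrix ι ι ℂ) : ℝ :=
  sSup {x | ∃ ρ, IsDensityMatrix ρ ∧ x = schattenNorm p (Φ ρ)}

/-- The von Neumann entropy `-Tr (ρ log ρ)` (natural log, `0 log 0 = 0`),
computed via eigenvalues. -/
def vNEntropy {ι : Type*} [Fintype ι] [DecidableEq ι] (ρ : Matrix ι ι ℂ) : ℝ :=
  if h : ρ.IsHermitian then -∑ i, (h.eigenvalues i) * Real.log (h.eigenvalues i) else 0

/-- The minimal output entropy of a map on matrices. -/
def minOutputEntropy {ι : Type*} [Fintype ι] [DecidableEq ι]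
    (Φ : Matrix ι ι ℂ → Matrix ι ι ℂ) : ℝ :=
  sInf {x | ∃ ρ, IsDensityMatrix ρ ∧ x = vNEntropy (Φ ρ)}

/-- The tensor product `Φ ⊗ Ω` of two superoperators, acting on matrices over the
product index set (Kronecker product structure). -/
def tensorMap {ι κ : Type*} [Fintype ι] [DecidableEq ι] [Fintype κ]
    (Φ : Matrix ι ι ℂ → Matrix ι ι ℂ) (Ω : Matrix κ κ ℂ → Matrix κ κ ℂ)
    (ρ : Matrix (ι × κ) (ι × κ) ℂ) : Matrix (ι × κ) (ι × κ) ℂ :=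
  ∑ i : ι, ∑ k : ι,
    (Φ (Matrix.single i k 1)) ⊗ₖ (Ω (Matrix.of fun j l => ρ (i, j) (k, l)))

/-- Complete positivity of a map on `d × d` matrices: `id ⊗ Φ` preserves positive
semidefiniteness on every extended space. -/
def IsCompletelyPositive {d : ℕ}
    (Φ : Matrix (Fin d) (Fin d) ℂ → Matrix (Fin d) (Fin d) ℂ) : Prop :=
  ∀ n : ℕ, ∀ ρ : Matrix (Fin n × Fin d) (Fin n × Fin d) ℂ, ρ.PosSemidef →
    (tensorMap (id : Matrix (Fin n) (Fin n) ℂ → Matrix (Fin n) (Fin n) ℂ) Φ ρ).PosSemidef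

/-- A channel: a completely positive trace-preserving linear map. -/
structure IsChannel {d : ℕ}
    (Φ : Matrix (Fin d) (Fin d) ℂ → Matrix (Fin d) (Fin d) ℂ) : Prop where
  map_add : ∀ A B, Φ (A + B) = Φ A + Φ B
  map_smul : ∀ (c : ℂ) A, Φ (c • A) = c • Φ A
  trace_preserving : ∀ A, (Φ A).trace = A.trace
  cp : IsCompletelyPositive Φ

/-- The Holevo capacity of a map on matrices: the supremum over finite ensembles of
the Holevo quantity. -/
def holevoCapacity {d : ℕ}
    (Φ : Matrix (Fin d) (Fin d) ℂ → Matrix (Fin d) (Fin d) ℂ) : ℝ :=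
  sSup {x | ∃ (m : ℕ) (w : Fin m → ℝ) (ρ : Fin m → Matrix (Fin d) (Fin d) ℂ),
    (∀ j, 0 < w j) ∧ (∑ j, w j = 1) ∧ (∀ j, IsDensityMatrix (ρ j)) ∧
    x = vNEntropy (Φ (∑ j, (w j : ℂ) • ρ j)) - ∑ j, w j * vNEntropy (Φ (ρ j))}

/-- The matrix logarithm of a Hermitian matrix, via the spectral theorem, with the
convention `log 0 = 0` on the kernel (i.e. on the support for PSD matrices). -/
def matLog {ι : Type*} [Fintype ι] [DecidableEq ι] (A : Matrix ι ι ℂ) : Matrix ι ι ℂ :=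
  if h : A.IsHermitian then
    (Matrix.IsHermitian.eigenvectorUnitary h : Matrix ι ι ℂ) *
      Matrix.diagonal (fun i => (Real.log (h.eigenvalues i) : ℂ)) *
      (star (Matrix.IsHermitian.eigenvectorUnitary h : Matrix ι ι ℂ))
  else 0

/-- Real-valued quantum relative entropy `H(ρ, γ) = Tr ρ (log ρ - log γ)`. -/
def relEntropyR {ι : Type*} [Fintype ι] [DecidableEq ι] (ρ γ : Matrix ι ι ℂ) : ℝ :=
  (Matrix.trace (ρ * (matLog ρ - matLog γ))).re

open Classical in
/-- Extended-real-valued quantum relative entropy, `+∞` when the support condition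
`ker γ ⊆ ker ρ` fails. -/
def relEntropy {ι : Type*} [Fintype ι] [DecidableEq ι] (ρ γ : Matrix ι ι ℂ) : EReal :=
  if ∀ x : ι → ℂ, γ.mulVec x = 0 → ρ.mulVec x = 0 then ((relEntropyR ρ γ : ℝ) : EReal)
  else ⊤

end GenDep

section Aux

open Polynomial Matrix GenDep

lemma charpoly_unitary_conj {d : ℕ} (U D : Matrix (Fin d) (Fin d) ℂ) (hU : U * Uᴴ = 1) :
    (U * D * Uᴴ).charpoly = D.charpoly := by
  have h1 : charmatrix (U * D * Uᴴ) =
      (U.map C) * charmatrix D * (Uᴴ.map C) := by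
    rw [charmatrix, charmatrix, mul_sub, sub_mul]
    congr 1
    · symm
      have hc : Commute (Matrix.scalar (Fin d) (X : ℂ[X])) (Uᴴ.map C) :=
        Matrix.scalar_commute _ (fun r => Commute.all _ _) _
      calc U.map C * Matrix.scalar (Fin d) (X : ℂ[X]) * Uᴴ.map C
          = U.map C * (Matrix.scalar (Fin d) (X : ℂ[X]) * Uᴴ.map C) := by
            rw [mul_assoc]
        _ = U.map C * (Uᴴ.map C * Matrix.scalar (Fin d) (X : ℂ[X])) := by rw [hc.eq]
        _ = (U * Uᴴ).map C * Matrix.scalar (Fin d) (X : ℂ[X]) := by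
            rw [← mul_assoc, ← Matrix.map_mul]
        _ = Matrix.scalar (Fin d) (X : ℂ[X]) := by
            rw [hU]; simp [Matrix.map_one]
    · simp only [RingHom.mapMatrix_apply, Matrix.map_mul]
  rw [Matrix.charpoly, Matrix.charpoly, h1, Matrix.det_mul, Matrix.det_mul]
  have h2 : (U.map C).det * (Uᴴ.map C).det = 1 := by
    rw [mul_comm, ← Matrix.det_mul, ← Matrix.map_mul, mul_eq_one_comm.mp hU]
    simp [Matrix.map_one]
  calc (U.map C).det * (charmatrix D).det * (Uᴴ.map C).det
      = (U.map C).det * (Uᴴ.map C).det * (charmatrix D).det := by ring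
    _ = (charmatrix D).det := by rw [h2, one_mul]

lemma charpoly_roots_diag {d : ℕ} (v : Fin d → ℂ) :
    (Matrix.diagonal v).charpoly.roots = Finset.univ.val.map v := by
  have h1 : charmatrix (Matrix.diagonal v) = Matrix.diagonal (fun i => (X : ℂ[X]) - C (v i)) := by
    ext i j
    by_cases h : i = j
    · subst h; simp [charmatrix_apply, Matrix.diagonal_apply_eq]
    · simp [charmatrix_apply, Matrix.diagonal_apply_ne _ h, h]
  rw [Matrix.charpoly, h1, Matrix.det_diagonal]
  have h2 : (∏ i, ((X : ℂ[X]) - C (v i))) =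
      ((Finset.univ.val.map v).map (fun a => (X : ℂ[X]) - C a)).prod := by
    rw [Multiset.map_map]
    rfl
  rw [h2, Polynomial.roots_multiset_prod_X_sub_C]

lemma eig_multiset {d : ℕ} {M : Matrix (Fin d) (Fin d) ℂ} (hM : M.IsHermitian)
    {U : Matrix (Fin d) (Fin d) ℂ} (hU : U * Uᴴ = 1) (v : Fin d → ℝ)
    (hMeq : M = U * Matrix.diagonal (fun i => (v i : ℂ)) * Uᴴ) :
    (Finset.univ.val.map hM.eigenvalues) = Finset.univ.val.map v := by
  have hW : (hM.eigenvectorUnitary : Matrix (Fin d) (Fin d) ℂ) *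
      (hM.eigenvectorUnitary : Matrix (Fin d) (Fin d) ℂ)ᴴ = 1 := by
    rw [← Matrix.star_eq_conjTranspose]
    exact Unitary.mul_star_self_of_mem hM.eigenvectorUnitary.2
  have hspec : M = (hM.eigenvectorUnitary : Matrix (Fin d) (Fin d) ℂ) *
      Matrix.diagonal (fun i => ((hM.eigenvalues i : ℝ) : ℂ)) *
      (hM.eigenvectorUnitary : Matrix (Fin d) (Fin d) ℂ)ᴴ := by
    rw [← Matrix.star_eq_conjTranspose]
    simpa [Function.comp_def] using hM.spectral_theorem
  have hc1 : (Matrix.diagonal (fun i => ((hM.eigenvalues i : ℝ) : ℂ))).charpoly =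
      (Matrix.diagonal (fun i => ((v i : ℝ) : ℂ))).charpoly := by
    rw [← charpoly_unitary_conj _ _ hW, ← hspec, hMeq, charpoly_unitary_conj _ _ hU]
  have hc2 := congrArg Polynomial.roots hc1
  rw [charpoly_roots_diag, charpoly_roots_diag] at hc2
  have hc3 := congrArg (Multiset.map Complex.re) hc2
  rw [Multiset.map_map, Multiset.map_map] at hc3
  simpa using hc3

lemma eig_sum {d : ℕ} {M : Matrix (Fin d) (Fin d) ℂ} (hM : M.IsHermitian)
    {U : Matrix (Fin d) (Fin d) ℂ} (hU : U * Uᴴ = 1) (v : Fin d → ℝ)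
    (hMeq : M = U * Matrix.diagonal (fun i => (v i : ℂ)) * Uᴴ) (f : ℝ → ℝ) :
    ∑ i, f (hM.eigenvalues i) = ∑ i, f (v i) := by
  have h := congrArg (fun s => (Multiset.map f s).sum) (eig_multiset hM hU v hMeq)
  simpa [Multiset.map_map, Finset.sum, Function.comp_def] using h

lemma schattenNorm_conj_diag {d : ℕ} (p : ℝ) {A U : Matrix (Fin d) (Fin d) ℂ}
    (hU : U * Uᴴ = 1) (hU' : Uᴴ * U = 1)
    (w : Fin d → ℝ) (hw : ∀ i, 0 ≤ w i)
    (hA : A = U * Matrix.diagonal (fun i => (w i : ℂ)) * Uᴴ) :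
    schattenNorm p A = (∑ i, (w i) ^ p) ^ (1/p) := by
  have hDh : (Matrix.diagonal (fun i => ((w i : ℝ) : ℂ)))ᴴ
      = Matrix.diagonal (fun i => ((w i : ℝ) : ℂ)) := by
    ext i j
    by_cases h : i = j
    · subst h
      simp [Matrix.diagonal_apply_eq, Complex.conj_ofReal]
    · simp [Matrix.diagonal_apply_ne, h, Ne.symm h]
  have hprod : Aᴴ * A = U * Matrix.diagonal (fun i => ((w i * w i : ℝ) : ℂ)) * Uᴴ := by
    rw [hA]
    rw [Matrix.conjTranspose_mul, Matrix.conjTranspose_mul, Matrix.conjTranspose_conjTranspose,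
      hDh]
    calc U * (Matrix.diagonal (fun i => ((w i : ℝ) : ℂ)) * Uᴴ) *
          (U * Matrix.diagonal (fun i => ((w i : ℝ) : ℂ)) * Uᴴ)
        = U * (Matrix.diagonal (fun i => ((w i : ℝ) : ℂ)) * ((Uᴴ * U) *
            (Matrix.diagonal (fun i => ((w i : ℝ) : ℂ)) * Uᴴ))) := by
          simp only [Matrix.mul_assoc]
      _ = U * (Matrix.diagonal (fun i => ((w i : ℝ) : ℂ)) *
            Matrix.diagonal (fun i => ((w i : ℝ) : ℂ))) * Uᴴ := by
          rw [hU', one_mul]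
          simp only [Matrix.mul_assoc]
      _ = U * Matrix.diagonal (fun i => ((w i * w i : ℝ) : ℂ)) * Uᴴ := by
          rw [Matrix.diagonal_mul_diagonal]
          push_cast
          rfl
  have hsum := eig_sum (Matrix.isHermitian_conjTranspose_mul_self A) hU
    (fun i => w i * w i) hprod (fun x => x ^ (p/2))
  rw [schattenNorm, hsum]
  congr 1
  refine Finset.sum_congr rfl fun i _ => ?_
  have h2 : w i * w i = w i ^ (2 : ℝ) := by
    rw [show (2:ℝ) = ((2:ℕ):ℝ) by norm_num, Real.rpow_natCast]
    ring
  rw [h2, ← Real.rpow_mul (hw i)]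
  have : 2 * (p / 2) = p := by ring
  rw [this]


lemma eig_sum_one {d : ℕ} {ρ : Matrix (Fin d) (Fin d) ℂ} (hρ : IsDensityMatrix ρ) :
    ∑ i, hρ.1.1.eigenvalues i = 1 := by
  have hH : ρ.IsHermitian := hρ.1.1
  have htr : ρ.trace = ∑ i, ((hH.eigenvalues i : ℝ) : ℂ) := by
    conv_lhs => rw [hH.spectral_theorem]
    rw [Unitary.conjStarAlgAut_apply, Matrix.trace_mul_cycle]
    rw [show (star (hH.eigenvectorUnitary : Matrix (Fin d) (Fin d) ℂ)) *
        (hH.eigenvectorUnitary : Matrix (Fin d) (Fin d) ℂ) = 1 from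
      Unitary.star_mul_self_of_mem hH.eigenvectorUnitary.2, one_mul]
    simp [Matrix.trace_diagonal, Function.comp]
  rw [hρ.2] at htr
  have : ((∑ i, hH.eigenvalues i : ℝ) : ℂ) = 1 := by
    push_cast
    exact htr.symm
  exact_mod_cast this

lemma depol_spectral {d : ℕ} (atot : ℝ) {ρ : Matrix (Fin d) (Fin d) ℂ}
    (hρ : IsDensityMatrix ρ) :
    depolarizing d atot ρ = (hρ.1.1.eigenvectorUnitary : Matrix (Fin d) (Fin d) ℂ) *
      Matrix.diagonal (fun i => ((atot * hρ.1.1.eigenvalues i + (1 - atot)/d : ℝ) : ℂ)) *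
      (hρ.1.1.eigenvectorUnitary : Matrix (Fin d) (Fin d) ℂ)ᴴ := by
  have hH : ρ.IsHermitian := hρ.1.1
  set U : Matrix (Fin d) (Fin d) ℂ := (hH.eigenvectorUnitary : Matrix (Fin d) (Fin d) ℂ) with hUdef
  have hW : U * Uᴴ = 1 := by
    rw [← Matrix.star_eq_conjTranspose]
    exact Unitary.mul_star_self_of_mem hH.eigenvectorUnitary.2
  have hspec : ρ = U * Matrix.diagonal (fun i => ((hH.eigenvalues i : ℝ) : ℂ)) * Uᴴ := by
    rw [← Matrix.star_eq_conjTranspose]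
    simpa [Function.comp_def] using hH.spectral_theorem
  have hdiag : Matrix.diagonal (fun i => ((atot * hH.eigenvalues i + (1 - atot)/d : ℝ) : ℂ)) =
      (atot : ℂ) • Matrix.diagonal (fun i => ((hH.eigenvalues i : ℝ) : ℂ)) +
      ((((1 : ℝ) - atot : ℝ) : ℂ) / d) • (1 : Matrix (Fin d) (Fin d) ℂ) := by
    ext i j
    by_cases h : i = j
    · subst h
      simp only [Matrix.diagonal_apply_eq, Matrix.add_apply, Matrix.smul_apply,
        Matrix.one_apply_eq, smul_eq_mul, mul_one]
      push_cast
      ring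
    · simp [Matrix.diagonal_apply_ne _ h, Matrix.one_apply_ne h, h]
  simp only [depolarizing, hρ.2, mul_one]
  rw [hdiag, Matrix.mul_add, Matrix.add_mul,
    Matrix.mul_smul, Matrix.smul_mul, Matrix.mul_smul, Matrix.smul_mul, ← hspec,
    Matrix.mul_one, hW]

lemma schatten_depol {d : ℕ} (atot p : ℝ) (h0 : 0 ≤ atot) (h1 : atot ≤ 1)
    {ρ : Matrix (Fin d) (Fin d) ℂ} (hρ : IsDensityMatrix ρ) :
    schattenNorm p (depolarizing d atot ρ) =
      (∑ i, (atot * hρ.1.1.eigenvalues i + (1 - atot)/d) ^ p) ^ (1/p) := by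
  have hH : ρ.IsHermitian := hρ.1.1
  have hW : (hH.eigenvectorUnitary : Matrix (Fin d) (Fin d) ℂ) *
      (hH.eigenvectorUnitary : Matrix (Fin d) (Fin d) ℂ)ᴴ = 1 := by
    rw [← Matrix.star_eq_conjTranspose]
    exact Unitary.mul_star_self_of_mem hH.eigenvectorUnitary.2
  have hW' : (hH.eigenvectorUnitary : Matrix (Fin d) (Fin d) ℂ)ᴴ *
      (hH.eigenvectorUnitary : Matrix (Fin d) (Fin d) ℂ) = 1 := by
    rw [← Matrix.star_eq_conjTranspose]
    exact Unitary.star_mul_self_of_mem hH.eigenvectorUnitary.2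
  exact schattenNorm_conj_diag p hW hW' _
    (fun i => add_nonneg (mul_nonneg h0 (hρ.1.eigenvalues_nonneg i))
      (div_nonneg (by linarith) (Nat.cast_nonneg d)))
    (depol_spectral atot hρ)

lemma affine_sum_eval {d : ℕ} (lam : Fin d → ℝ) (hsum : ∑ i, lam i = 1) (bp cp : ℝ) :
    ∑ i, ((1 - lam i) * cp + lam i * bp) = bp + ((d : ℝ) - 1) * cp := by
  rw [Finset.sum_add_distrib, ← Finset.sum_mul, ← Finset.sum_mul, hsum]
  have : ∑ i, (1 - lam i) = (d : ℝ) - 1 := by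
    rw [Finset.sum_sub_distrib, hsum, Finset.sum_const, Finset.card_univ]
    simp
  rw [this]
  ring

lemma sum_rpow_le {d : ℕ} (atot p : ℝ) (h0 : 0 ≤ atot) (h1 : atot ≤ 1) (hp : 1 ≤ p)
    (lam : Fin d → ℝ) (hnn : ∀ i, 0 ≤ lam i) (hsum : ∑ i, lam i = 1) :
    ∑ i, (atot * lam i + (1 - atot)/d) ^ p ≤
      (atot + (1 - atot)/d) ^ p + ((d : ℝ) - 1) * ((1 - atot)/d) ^ p := by
  set c : ℝ := (1 - atot)/d with hc
  have hc0 : 0 ≤ c := div_nonneg (by linarith) (Nat.cast_nonneg d)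
  have key : ∀ i, (atot * lam i + c) ^ p ≤ (1 - lam i) * c ^ p + lam i * (atot + c) ^ p := by
    intro i
    have hle1 : lam i ≤ 1 := by
      rw [← hsum]
      exact Finset.single_le_sum (fun j _ => hnn j) (Finset.mem_univ i)
    have := (convexOn_rpow hp).2 (Set.mem_Ici.mpr hc0)
      (Set.mem_Ici.mpr (by linarith : (0:ℝ) ≤ atot + c))
      (by linarith : (0:ℝ) ≤ 1 - lam i) (hnn i) (by ring)
    have h2 : (1 - lam i) • c + lam i • (atot + c) = atot * lam i + c := by
      simp only [smul_eq_mul]; ring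
    rw [h2] at this
    simp only [smul_eq_mul] at this
    linarith
  calc ∑ i, (atot * lam i + c) ^ p ≤ ∑ i, ((1 - lam i) * c ^ p + lam i * (atot + c) ^ p) :=
        Finset.sum_le_sum fun i _ => key i
    _ = (atot + c) ^ p + ((d : ℝ) - 1) * c ^ p := affine_sum_eval lam hsum _ _

lemma sum_rpow_proj {d : ℕ} (atot p : ℝ)
    (lam : Fin d → ℝ) (h01 : ∀ i, lam i = 0 ∨ lam i = 1) (hsum : ∑ i, lam i = 1) :
    ∑ i, (atot * lam i + (1 - atot)/d) ^ p =
      (atot + (1 - atot)/d) ^ p + ((d : ℝ) - 1) * ((1 - atot)/d) ^ p := by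
  set c : ℝ := (1 - atot)/d with hc
  have key : ∀ i, (atot * lam i + c) ^ p = (1 - lam i) * c ^ p + lam i * (atot + c) ^ p := by
    intro i
    rcases h01 i with h | h <;> rw [h] <;> ring_nf
  calc ∑ i, (atot * lam i + c) ^ p = ∑ i, ((1 - lam i) * c ^ p + lam i * (atot + c) ^ p) :=
        Finset.sum_congr rfl fun i _ => key i
    _ = (atot + c) ^ p + ((d : ℝ) - 1) * c ^ p := affine_sum_eval lam hsum _ _

lemma posSemidef_real_smul {d : ℕ} {r : ℝ} (hr : 0 ≤ r) {M : Matrix (Fin d) (Fin d) ℂ}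
    (hM : M.PosSemidef) : ((r : ℂ) • M).PosSemidef := by
  refine Matrix.posSemidef_iff_dotProduct_mulVec.mpr ⟨?_, ?_⟩
  · unfold Matrix.IsHermitian
    rw [Matrix.conjTranspose_smul, hM.1.eq]
    congr 1
    simp [Complex.star_def, Complex.conj_ofReal]
  · intro x
    rw [Matrix.smul_mulVec, dotProduct_smul, smul_eq_mul]
    exact mul_nonneg (by exact_mod_cast Complex.zero_le_real.mpr hr) (hM.dotProduct_mulVec_nonneg x)

lemma vecMulVec_density {d : ℕ} (ψ : Fin d → ℂ) (hψ : dotProduct (star ψ) ψ = 1) :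
    IsDensityMatrix (Matrix.vecMulVec ψ (star ψ)) := by
  refine ⟨Matrix.posSemidef_iff_dotProduct_mulVec.mpr ⟨?_, ?_⟩, ?_⟩
  · unfold Matrix.IsHermitian
    ext i j
    simp [Matrix.conjTranspose_apply, Matrix.vecMulVec_apply, mul_comm]
  · intro x
    have hmv : Matrix.vecMulVec ψ (star ψ) *ᵥ x = (dotProduct (star ψ) x) • ψ := by
      funext i
      simp [Matrix.mulVec, Matrix.vecMulVec_apply, dotProduct, Finset.mul_sum,
        mul_assoc, mul_comm, mul_left_comm]
    rw [hmv, dotProduct_smul, smul_eq_mul]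
    have hsd : dotProduct (star x) ψ = star (dotProduct (star ψ) x) := by
      simp [dotProduct, Finset.sum_comm, mul_comm]
    rw [hsd, mul_comm]
    exact star_mul_self_nonneg _
  · rw [Matrix.trace]
    simp only [Matrix.diag_apply, Matrix.vecMulVec_apply]
    rw [← hψ, dotProduct]
    exact Finset.sum_congr rfl fun i _ => mul_comm _ _

lemma vecMulVec_mul_self {d : ℕ} (ψ : Fin d → ℂ) (hψ : dotProduct (star ψ) ψ = 1) :
    Matrix.vecMulVec ψ (star ψ) * Matrix.vecMulVec ψ (star ψ) = Matrix.vecMulVec ψ (star ψ) := by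
  ext i j
  rw [Matrix.mul_apply]
  simp only [Matrix.vecMulVec_apply]
  calc ∑ k, ψ i * star ψ k * (ψ k * star ψ j)
      = (ψ i * star ψ j) * ∑ k, star ψ k * ψ k := by
        rw [Finset.mul_sum]; exact Finset.sum_congr rfl fun k _ => by ring
    _ = ψ i * star ψ j := by
        rw [show ∑ k, star ψ k * ψ k = dotProduct (star ψ) ψ from rfl, hψ, mul_one]

lemma proj_eigenvalues {d : ℕ} {P : Matrix (Fin d) (Fin d) ℂ} (hP : IsDensityMatrix P)
    (hPP : P * P = P) : ∀ i, hP.1.1.eigenvalues i = 0 ∨ hP.1.1.eigenvalues i = 1 := by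
  intro i
  have hH : P.IsHermitian := hP.1.1
  set U : Matrix (Fin d) (Fin d) ℂ := (hH.eigenvectorUnitary : Matrix (Fin d) (Fin d) ℂ)
  have hW : U * star U = 1 := Unitary.mul_star_self_of_mem hH.eigenvectorUnitary.2
  have hD : star U * P * U = Matrix.diagonal (RCLike.ofReal ∘ hH.eigenvalues) := by
    have h := hH.spectral_theorem
    simp only [Unitary.conjStarAlgAut_apply] at h
    have hW2 : star U * U = 1 := Unitary.star_mul_self_of_mem hH.eigenvectorUnitary.2
    calc star U * P * U
        = star U * (U * Matrix.diagonal (RCLike.ofReal ∘ hH.eigenvalues) * star U) * U := by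
          rw [← h]
      _ = (star U * U) * Matrix.diagonal (RCLike.ofReal ∘ hH.eigenvalues) * (star U * U) := by
          simp only [Matrix.mul_assoc]
      _ = Matrix.diagonal (RCLike.ofReal ∘ hH.eigenvalues) := by
          rw [hW2, Matrix.one_mul, Matrix.mul_one]
  have hsq : (star U * P * U) * (star U * P * U) = star U * P * U := by
    calc (star U * P * U) * (star U * P * U)
        = star U * (P * (U * star U) * P) * U := by simp only [Matrix.mul_assoc]
      _ = star U * (P * P) * U := by rw [hW, Matrix.mul_one]
      _ = star U * P * U := by rw [hPP, Matrix.mul_assoc]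
  rw [hD, Matrix.diagonal_mul_diagonal] at hsq
  have := congrFun (congrFun hsq i) i
  simp only [Matrix.diagonal_apply_eq, Pi.mul_apply, Function.comp_apply] at this
  have hr : hH.eigenvalues i * hH.eigenvalues i = hH.eigenvalues i := by
    exact_mod_cast this
  have : hH.eigenvalues i * (hH.eigenvalues i - 1) = 0 := by ring_nf; linarith [hr]
  rcases mul_eq_zero.mp this with h | h
  · exact Or.inl h
  · exact Or.inr (by linarith)

lemma conj_vecMulVec {d : ℕ} (V : Matrix (Fin d) (Fin d) ℂ) (ψ : Fin d → ℂ) :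
    V * Matrix.vecMulVec ψ (star ψ) * Vᴴ =
      Matrix.vecMulVec (V *ᵥ ψ) (star (V *ᵥ ψ)) := by
  ext i j
  simp only [Matrix.mul_apply, Matrix.vecMulVec_apply, Matrix.conjTranspose_apply,
    Matrix.mulVec, dotProduct, Pi.star_apply, star_sum, star_mul']
  simp only [Finset.sum_mul, Finset.mul_sum]
  refine Finset.sum_congr rfl fun k _ => Finset.sum_congr rfl fun l _ => by ring

lemma vecMulVec_smul_smul {d : ℕ} (c : ℂ) (ψ : Fin d → ℂ) :
    Matrix.vecMulVec (c • ψ) (star (c • ψ)) =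
      (c * star c) • Matrix.vecMulVec ψ (star ψ) := by
  ext i j
  simp only [Matrix.vecMulVec_apply, Pi.smul_apply, Pi.star_apply, smul_eq_mul,
    star_mul', Matrix.smul_apply]
  ring

lemma unit_eigenvalue_norm {d : ℕ} {V : Matrix (Fin d) (Fin d) ℂ} (hV : Vᴴ * V = 1)
    {ψ : Fin d → ℂ} (hψ : dotProduct (star ψ) ψ = 1) {c : ℂ}
    (hc : V *ᵥ ψ = c • ψ) : c * star c = 1 := by
  have h1 : dotProduct (star (V *ᵥ ψ)) (V *ᵥ ψ) = 1 := by
    rw [Matrix.star_mulVec, ← dotProduct_mulVec, Matrix.mulVec_mulVec, hV,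
      Matrix.one_mulVec, hψ]
  rw [hc] at h1
  have : c * star c * dotProduct (star ψ) ψ = 1 := by
    rw [← h1]
    simp only [dotProduct, Pi.smul_apply, Pi.star_apply, smul_eq_mul, star_mul',
      Finset.mul_sum]
    exact Finset.sum_congr rfl fun k _ => by ring
  rwa [hψ, mul_one] at this
end Aux

set_option maxHeartbeats 2000000 in
open GenDep in
/-- For a generalized depolarizing channel whose unitaries have a common
unit eigenvector `ψ`, the output `p`-norm at `|ψ⟩⟨ψ|` equals the maximal output
`p`-norm, which equals that of the depolarizing channel with the same parameter. -/
theorem stmt_0 {d : ℕ} (hd : 0 < d) {ι : Type*} [Fintype ι]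
    (a : ι → ℝ) (V : ι → Matrix (Fin d) (Fin d) ℂ) (atot : ℝ)
    (ha : ∀ k, 0 < a k) (hatot : atot = ∑ k, a k)
    (hatot0 : 0 < atot) (hatot1 : atot < 1)
    (hV : ∀ k, IsUnitary (V k))
    (Φ : Matrix (Fin d) (Fin d) ℂ → Matrix (Fin d) (Fin d) ℂ)
    (hΦ : ∀ ρ, Φ ρ =
      (∑ k, (a k : ℂ) • (V k * ρ * (V k)ᴴ)) +
        ((((1 : ℝ) - atot : ℝ) : ℂ) / d * ρ.trace) • 1)
    (ψ : Fin d → ℂ) (hψ : star ψ ⬝ᵥ ψ = 1)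
    (hcommon : ∀ k, ∃ c : ℂ, (V k).mulVec ψ = c • ψ)
    (p : ℝ) (hp : 1 ≤ p) :
    schattenNorm p (Φ (Matrix.vecMulVec ψ (star ψ))) = maxOutputPNorm p Φ ∧
      maxOutputPNorm p Φ = maxOutputPNorm p (depolarizing d atot) := by
  classical
  -- abbreviations
  set P : Matrix (Fin d) (Fin d) ℂ := Matrix.vecMulVec ψ (star ψ) with hPdef
  have hPdens : IsDensityMatrix P := vecMulVec_density ψ hψ
  have hPP : P * P = P := vecMulVec_mul_self ψ hψ
  -- the averaged state
  set σ : Matrix (Fin d) (Fin d) ℂ → Matrix (Fin d) (Fin d) ℂ :=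
    fun ρ => ∑ k, ((a k / atot : ℝ) : ℂ) • (V k * ρ * (V k)ᴴ) with hσdef
  have hσdens : ∀ ρ, IsDensityMatrix ρ → IsDensityMatrix (σ ρ) := by
    intro ρ hρ
    constructor
    · apply Finset.sum_induction _ Matrix.PosSemidef
        (fun A B hA hB => hA.add hB) Matrix.PosSemidef.zero
      intro k _
      exact posSemidef_real_smul (div_nonneg (ha k).le hatot0.le)
        (hρ.1.mul_mul_conjTranspose_same (V k))
    · rw [Matrix.trace_sum]
      have hone : ∀ k : ι, (((a k / atot : ℝ) : ℂ) • (V k * ρ * (V k)ᴴ)).trace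
          = ((a k / atot : ℝ) : ℂ) := by
        intro k
        rw [Matrix.trace_smul, Matrix.trace_mul_cycle, (hV k).1, Matrix.one_mul,
          hρ.2, smul_eq_mul, mul_one]
      rw [Finset.sum_congr rfl fun k _ => hone k]
      have : (∑ k, ((a k / atot : ℝ) : ℂ)) = (((∑ k, a k) / atot : ℝ) : ℂ) := by
        push_cast
        rw [Finset.sum_div]
      rw [this, ← hatot, div_self hatot0.ne']
      norm_num
  have hΦdep : ∀ ρ, IsDensityMatrix ρ → Φ ρ = depolarizing d atot (σ ρ) := by
    intro ρ hρ
    rw [hΦ, depolarizing, (hσdens ρ hρ).2, hρ.2, mul_one]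
    congr 1
    rw [hσdef]
    rw [Finset.smul_sum]
    refine Finset.sum_congr rfl fun k _ => ?_
    rw [smul_smul]
    congr 1
    push_cast
    field_simp
  -- Φ fixes P up to depolarizing
  have hσP : σ P = P := by
    rw [hσdef]
    have hfix : ∀ k : ι, V k * P * (V k)ᴴ = P := by
      intro k
      obtain ⟨c, hc⟩ := hcommon k
      rw [hPdef, conj_vecMulVec, hc, vecMulVec_smul_smul,
        unit_eigenvalue_norm (hV k).1 hψ hc, one_smul]
    simp only [hfix]
    rw [← Finset.sum_smul]
    have : (∑ k, ((a k / atot : ℝ) : ℂ)) = 1 := by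
      have h1 : (∑ k, ((a k / atot : ℝ) : ℂ)) = (((∑ k, a k) / atot : ℝ) : ℂ) := by
        push_cast
        rw [Finset.sum_div]
      rw [h1, ← hatot, div_self hatot0.ne']
      norm_num
    rw [this, one_smul]
  have hΦP : Φ P = depolarizing d atot P := by
    rw [hΦdep P hPdens, hσP]
  -- the common value
  set B : ℝ := schattenNorm p (depolarizing d atot P) with hBdef
  -- upper bound for all density matrices
  have hub : ∀ ρ, IsDensityMatrix ρ → schattenNorm p (depolarizing d atot ρ) ≤ B := by
    intro ρ hρ
    rw [hBdef, schatten_depol atot p hatot0.le hatot1.le hρ,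
      schatten_depol atot p hatot0.le hatot1.le hPdens]
    have heval : ∑ i, (atot * hPdens.1.1.eigenvalues i + (1 - atot)/d) ^ p =
        (atot + (1 - atot)/d) ^ p + ((d : ℝ) - 1) * ((1 - atot)/d) ^ p :=
      sum_rpow_proj atot p _ (proj_eigenvalues hPdens hPP) (eig_sum_one hPdens)
    rw [heval]
    apply Real.rpow_le_rpow
    · exact Finset.sum_nonneg fun i _ => Real.rpow_nonneg
        (add_nonneg (mul_nonneg hatot0.le (hρ.1.eigenvalues_nonneg i))
          (div_nonneg (by linarith) (Nat.cast_nonneg d))) p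
    · exact sum_rpow_le atot p hatot0.le hatot1.le hp _
        (fun i => hρ.1.eigenvalues_nonneg i) (eig_sum_one hρ)
    · positivity
  -- B is the greatest element of both output-norm sets
  have hgreatΓ : IsGreatest
      {x | ∃ ρ, IsDensityMatrix ρ ∧ x = schattenNorm p (depolarizing d atot ρ)} B :=
    ⟨⟨P, hPdens, rfl⟩, by rintro x ⟨ρ, hρ, rfl⟩; exact hub ρ hρ⟩
  have hgreatΦ : IsGreatest
      {x | ∃ ρ, IsDensityMatrix ρ ∧ x = schattenNorm p (Φ ρ)} B := by
    constructor
    · exact ⟨P, hPdens, by rw [hΦP]⟩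
    · rintro x ⟨ρ, hρ, rfl⟩
      rw [hΦdep ρ hρ]
      exact hub (σ ρ) (hσdens ρ hρ)
  constructor
  · rw [hΦP, maxOutputPNorm, hgreatΦ.csSup_eq]
  · rw [maxOutputPNorm, maxOutputPNorm, hgreatΦ.csSup_eq, hgreatΓ.csSup_eq]
end
end

section
/- Let Φ be a generalized depolarizing channel on d×d complex matrices whose unitary matrices V_k have a common unit eigenvector ψ. Then S(Φ(|ψ⟩⟨ψ|)) = S_min(Φ) = S_min(Γ_a), where Γ_a is the depolarizing channel with the same parameter a. -/
open scoped BigOperators Matrix Kronecker ComplexOrder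

noncomputable section

section AuxAll
open Matrix


namespace Aux

variable {n : Type*} [Fintype n] [DecidableEq n]

lemma eigvec_dot {A : Matrix n n ℂ} (hA : A.IsHermitian) (i : n) :
    star (⇑(hA.eigenvectorBasis i)) ⬝ᵥ ⇑(hA.eigenvectorBasis i) = 1 := by
  have h2 := inner_self_eq_norm_sq_to_K (𝕜 := ℂ) (hA.eigenvectorBasis i)
  rw [EuclideanSpace.inner_eq_star_dotProduct] at h2
  have h1 : ‖hA.eigenvectorBasis i‖ = 1 := hA.eigenvectorBasis.orthonormal.1 i
  rw [h1] at h2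
  rw [dotProduct_comm]
  simpa using h2

lemma eig_ge {A : Matrix n n ℂ} (hA : A.IsHermitian) {c : ℝ}
    (h : (A - (c : ℂ) • 1).PosSemidef) (i : n) : c ≤ hA.eigenvalues i := by
  have hv := h.dotProduct_mulVec_nonneg (⇑(hA.eigenvectorBasis i))
  rw [Matrix.sub_mulVec, Matrix.smul_mulVec, Matrix.one_mulVec,
    hA.mulVec_eigenvectorBasis] at hv
  have hd : star (⇑(hA.eigenvectorBasis i)) ⬝ᵥ
      (hA.eigenvalues i • ⇑(hA.eigenvectorBasis i) - (c:ℂ) • ⇑(hA.eigenvectorBasis i))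
      = ((hA.eigenvalues i : ℂ) - c) := by
    rw [dotProduct_sub]
    have : (hA.eigenvalues i) • ⇑(hA.eigenvectorBasis i)
        = (hA.eigenvalues i : ℂ) • ⇑(hA.eigenvectorBasis i) := by
      ext j; simp [Complex.real_smul]
    rw [this, dotProduct_smul, dotProduct_smul, eigvec_dot hA i]
    simp
  rw [hd] at hv
  have : (0:ℂ) ≤ ((hA.eigenvalues i - c : ℝ) : ℂ) := by push_cast; exact hv
  rw [Complex.zero_le_real] at this
  linarith

lemma eig_le {A : Matrix n n ℂ} (hA : A.IsHermitian) {c : ℝ}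
    (h : ((c : ℂ) • 1 - A).PosSemidef) (i : n) : hA.eigenvalues i ≤ c := by
  have hv := h.dotProduct_mulVec_nonneg (⇑(hA.eigenvectorBasis i))
  rw [Matrix.sub_mulVec, Matrix.smul_mulVec, Matrix.one_mulVec,
    hA.mulVec_eigenvectorBasis] at hv
  have hd : star (⇑(hA.eigenvectorBasis i)) ⬝ᵥ
      ((c:ℂ) • ⇑(hA.eigenvectorBasis i) - hA.eigenvalues i • ⇑(hA.eigenvectorBasis i))
      = ((c : ℂ) - hA.eigenvalues i) := by
    rw [dotProduct_sub]
    have : (hA.eigenvalues i) • ⇑(hA.eigenvectorBasis i)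
        = (hA.eigenvalues i : ℂ) • ⇑(hA.eigenvectorBasis i) := by
      ext j; simp [Complex.real_smul]
    rw [this, dotProduct_smul, dotProduct_smul, eigvec_dot hA i]
    simp
  rw [hd] at hv
  have : (0:ℂ) ≤ ((c - hA.eigenvalues i : ℝ) : ℂ) := by push_cast; exact hv
  rw [Complex.zero_le_real] at this
  linarith

lemma trace_eq_sum_eig {A : Matrix n n ℂ} (hA : A.IsHermitian) :
    A.trace = ∑ i, (hA.eigenvalues i : ℂ) := by
  conv_lhs => rw [hA.spectral_theorem]
  rw [Unitary.conjStarAlgAut_apply]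
  rw [Matrix.trace_mul_cycle,
    show (star (hA.eigenvectorUnitary : Matrix n n ℂ)) * (hA.eigenvectorUnitary : Matrix n n ℂ) = 1
      from Matrix.mem_unitaryGroup_iff'.mp (hA.eigenvectorUnitary).2,
    Matrix.one_mul, Matrix.trace_diagonal]
  rfl

lemma eig_quad {A : Matrix n n ℂ} (hA : A.IsHermitian) {m M : ℝ}
    (hq : (A - (m:ℂ) • 1) * (A - (M:ℂ) • 1) = 0) (i : n) :
    hA.eigenvalues i = m ∨ hA.eigenvalues i = M := by
  have hv0 : ⇑(hA.eigenvectorBasis i) ≠ (0 : n → ℂ) := by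
    intro h
    have := eigvec_dot hA i
    rw [h] at this
    simp at this
  have hre : A *ᵥ ⇑(hA.eigenvectorBasis i) = (hA.eigenvalues i : ℂ) • ⇑(hA.eigenvectorBasis i) := by
    rw [hA.mulVec_eigenvectorBasis]; ext j; simp [Complex.real_smul]
  have hw : ∀ c : ℝ, (A - (c:ℂ) • 1) *ᵥ ⇑(hA.eigenvectorBasis i) = ((hA.eigenvalues i : ℂ) - c) • ⇑(hA.eigenvectorBasis i) := by
    intro c
    rw [Matrix.sub_mulVec, Matrix.smul_mulVec, Matrix.one_mulVec, hre, ← sub_smul]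
  have h1 : ((A - (m:ℂ) • 1) * (A - (M:ℂ) • 1)) *ᵥ ⇑(hA.eigenvectorBasis i)
      = (((hA.eigenvalues i : ℂ) - m) * ((hA.eigenvalues i : ℂ) - M)) • ⇑(hA.eigenvectorBasis i) := by
    rw [← Matrix.mulVec_mulVec, hw M, Matrix.mulVec_smul, hw m, smul_smul, mul_comm]
  rw [hq, Matrix.zero_mulVec] at h1
  rcases smul_eq_zero.1 h1.symm with h2 | h2
  swap
  · exact absurd (funext fun j => congrFun h2 j) hv0
  rcases mul_eq_zero.1 h2 with h | h
  · left; have := sub_eq_zero.1 h; exact_mod_cast this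
  · right; have := sub_eq_zero.1 h; exact_mod_cast this

end Aux

namespace Aux2

lemma chord {d : ℕ} {m M : ℝ} (hm : 0 ≤ m) (hmM : m < M)
    (lam : Fin d → ℝ) (hge : ∀ i, m ≤ lam i) (hle : ∀ i, lam i ≤ M)
    (hsum : ∑ i, lam i = 1) (hconv : M + ((d:ℝ) - 1) * m = 1) :
    Real.negMulLog M + ((d:ℝ) - 1) * Real.negMulLog m ≤ ∑ i, Real.negMulLog (lam i) := by
  have hMm : (0:ℝ) < M - m := sub_pos.2 hmM
  have key : ∀ i, ((M - lam i)/(M - m)) * Real.negMulLog m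
      + ((lam i - m)/(M - m)) * Real.negMulLog M ≤ Real.negMulLog (lam i) := by
    intro i
    have h1 : (0:ℝ) ≤ (M - lam i)/(M - m) := div_nonneg (by linarith [hle i]) hMm.le
    have h2 : (0:ℝ) ≤ (lam i - m)/(M - m) := div_nonneg (by linarith [hge i]) hMm.le
    have h3 : (M - lam i)/(M - m) + (lam i - m)/(M - m) = 1 := by
      field_simp
      ring
    have := Real.concaveOn_negMulLog.2 (Set.mem_Ici.2 hm)
      (Set.mem_Ici.2 (hm.trans hmM.le)) h1 h2 h3
    have hcomb : ((M - lam i)/(M - m)) • m + ((lam i - m)/(M - m)) • M = lam i := by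
      simp only [smul_eq_mul]
      field_simp
      ring
    rw [hcomb] at this
    simpa using this
  have hsum2 : ∑ i, (((M - lam i)/(M - m)) * Real.negMulLog m
      + ((lam i - m)/(M - m)) * Real.negMulLog M)
      = Real.negMulLog M + ((d:ℝ) - 1) * Real.negMulLog m := by
    have hterm : ∀ i, ((M - lam i)/(M - m)) * Real.negMulLog m
        + ((lam i - m)/(M - m)) * Real.negMulLog M
        = (M * Real.negMulLog m - m * Real.negMulLog M)/(M - m)
          + lam i * ((Real.negMulLog M - Real.negMulLog m)/(M - m)) := by
      intro i; field_simp; ring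
    rw [Finset.sum_congr rfl fun i _ => hterm i, Finset.sum_add_distrib,
      Finset.sum_const, ← Finset.sum_mul, hsum, Finset.card_univ, Fintype.card_fin, nsmul_eq_mul]
    field_simp
    first
    | linear_combination (2*Real.negMulLog m - 2*Real.negMulLog M) * hconv
    | linear_combination (Real.negMulLog M - Real.negMulLog m) * hconv
    | linear_combination (Real.negMulLog m - Real.negMulLog M) * hconv
    | linear_combination (2*Real.negMulLog M - 2*Real.negMulLog m) * hconv
    | nlinarith [hconv]
  calc Real.negMulLog M + ((d:ℝ) - 1) * Real.negMulLog m
      = ∑ i, (((M - lam i)/(M - m)) * Real.negMulLog m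
        + ((lam i - m)/(M - m)) * Real.negMulLog M) := hsum2.symm
    _ ≤ ∑ i, Real.negMulLog (lam i) := Finset.sum_le_sum fun i _ => key i

lemma two_values {d : ℕ} {m M : ℝ} (hne : m ≠ M)
    (lam : Fin d → ℝ) (hlam : ∀ i, lam i = m ∨ lam i = M)
    (hsum : ∑ i, lam i = 1) (hconv : M + ((d:ℝ) - 1) * m = 1) :
    ∑ i, Real.negMulLog (lam i) = Real.negMulLog M + ((d:ℝ) - 1) * Real.negMulLog m := by
  classical
  set T := Finset.univ.filter (fun i => lam i = M) with hT
  set s := T.card with hs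
  set t := (Finset.univ.filter (fun i => ¬ lam i = M)).card with ht
  have hst : s + t = d := by
    rw [hs, ht, Finset.card_filter_add_card_filter_not, Finset.card_univ,
      Fintype.card_fin]
  have hsplit : ∀ g : ℝ → ℝ, ∑ i, g (lam i) = s * g M + t * g m := by
    intro g
    rw [← Finset.sum_filter_add_sum_filter_not Finset.univ (fun i => lam i = M)]
    congr 1
    · rw [Finset.sum_congr rfl (fun i hi => by
        rw [(Finset.mem_filter.1 hi).2]), Finset.sum_const, nsmul_eq_mul]
    · rw [Finset.sum_congr rfl (fun i hi => by
        rcases hlam i with h | h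
        · rw [h]
        · exact absurd h (Finset.mem_filter.1 hi).2), Finset.sum_const, nsmul_eq_mul]
  have h1 : (s:ℝ) * M + t * m = 1 := by
    have h := hsplit id
    simp only [id_eq] at h
    rw [← h]; exact hsum
  have hd' : (s:ℝ) + t = d := by exact_mod_cast hst
  have hkey : ((s:ℝ) - 1) * (M - m) = 0 := by linear_combination h1 - hconv - m * hd'
  have hs1 : (s:ℝ) = 1 := by
    rcases mul_eq_zero.1 hkey with h | h
    · linarith
    · exact absurd (by linarith : m = M) hne
  have ht1 : (t:ℝ) = (d:ℝ) - 1 := by linarith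
  rw [hsplit Real.negMulLog, hs1, ht1]
  ring

end Aux2
namespace Aux3

variable {n : Type*} [Fintype n] [DecidableEq n]

lemma psd_smul {A : Matrix n n ℂ} (hA : A.PosSemidef) {r : ℝ} (hr : 0 ≤ r) :
    ((r : ℂ) • A).PosSemidef := by
  refine Matrix.PosSemidef.of_dotProduct_mulVec_nonneg ?_ ?_
  · unfold Matrix.IsHermitian
    rw [conjTranspose_smul, hA.1.eq]
    congr 1
    simp [Complex.star_def, Complex.conj_ofReal]
  · intro x
    rw [smul_mulVec, dotProduct_smul, smul_eq_mul]
    exact mul_nonneg (by rw [Complex.zero_le_real]; exact hr) (hA.dotProduct_mulVec_nonneg x)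

lemma herm_real_smul_one (r : ℝ) : (((r : ℂ) • 1 : Matrix n n ℂ)).IsHermitian := by
  unfold Matrix.IsHermitian
  rw [conjTranspose_smul, conjTranspose_one]
  congr 1
  simp [Complex.star_def, Complex.conj_ofReal]

/-- a density matrix is dominated by the identity -/
lemma one_sub_density {ρ : Matrix n n ℂ} (h1 : ρ.PosSemidef) (h2 : ρ.trace = 1) :
    ((1 : Matrix n n ℂ) - ρ).PosSemidef := by
  have hherm := h1.1
  have hsum : ∑ i, hherm.eigenvalues i = 1 := by
    have := Aux.trace_eq_sum_eig hherm
    rw [h2] at this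
    have : ((1:ℝ) : ℂ) = ((∑ i, hherm.eigenvalues i : ℝ) : ℂ) := by push_cast; exact this
    exact_mod_cast this.symm
  have hle : ∀ i, hherm.eigenvalues i ≤ 1 := by
    intro i
    rw [← hsum]
    exact Finset.single_le_sum (fun j _ => h1.eigenvalues_nonneg j) (Finset.mem_univ i)
  have hU : ((hherm.eigenvectorUnitary : Matrix n n ℂ)) * (star (hherm.eigenvectorUnitary : Matrix n n ℂ)) = 1 :=
    Matrix.mem_unitaryGroup_iff.mp (hherm.eigenvectorUnitary).2
  have hdiag : diagonal (fun i => ((1 - hherm.eigenvalues i : ℝ) : ℂ))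
      = 1 - diagonal (RCLike.ofReal ∘ hherm.eigenvalues) := by
    ext i j
    rcases eq_or_ne i j with h | h <;>
      simp [Matrix.diagonal_apply, h, Function.comp, Matrix.one_apply, Complex.ofReal_sub]
  have hdecomp : (1 : Matrix n n ℂ) - ρ
      = (hherm.eigenvectorUnitary : Matrix n n ℂ)
        * diagonal (fun i => ((1 - hherm.eigenvalues i : ℝ) : ℂ))
        * (star (hherm.eigenvectorUnitary : Matrix n n ℂ)) := by
    rw [hdiag, Matrix.mul_sub, Matrix.mul_one, Matrix.sub_mul, hU]
    conv_lhs => rw [hherm.spectral_theorem]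
    rw [Unitary.conjStarAlgAut_apply]
  rw [hdecomp]
  exact Matrix.PosSemidef.mul_mul_conjTranspose_same
    (Matrix.PosSemidef.diagonal (by
      intro i
      simp only [Pi.zero_apply]
      rw [Complex.zero_le_real]
      linarith [hle i]))
    _

end Aux3
namespace Main
open GenDep Aux Aux2 Aux3

variable {d : ℕ}

lemma vNEntropy_eq_sum {A : Matrix (Fin d) (Fin d) ℂ} (hA : A.IsHermitian) :
    vNEntropy A = ∑ i, Real.negMulLog (hA.eigenvalues i) := by
  rw [vNEntropy, dif_pos hA]
  rw [← Finset.sum_neg_distrib]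
  exact Finset.sum_congr rfl fun i _ => by rw [Real.negMulLog]; ring

lemma sum_eig_one {A : Matrix (Fin d) (Fin d) ℂ} (hA : A.IsHermitian)
    (htr : A.trace = 1) : ∑ i, hA.eigenvalues i = 1 := by
  have h := Aux.trace_eq_sum_eig hA
  rw [htr] at h
  have h2 : ((1:ℝ) : ℂ) = ((∑ i, hA.eigenvalues i : ℝ) : ℂ) := by push_cast; exact h
  exact_mod_cast h2.symm

/-- Generic lower bound for the output entropy of a generalized depolarizing channel. -/
lemma key_lb (hd : 0 < d) {ι : Type*} [Fintype ι]
    (a : ι → ℝ) (V : ι → Matrix (Fin d) (Fin d) ℂ) (atot : ℝ)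
    (ha : ∀ k, 0 < a k) (hatot : atot = ∑ k, a k)
    (hatot0 : 0 < atot) (hatot1 : atot < 1)
    (hV : ∀ k, IsUnitary (V k))
    (ρ : Matrix (Fin d) (Fin d) ℂ) (hρ : IsDensityMatrix ρ) :
    Real.negMulLog (atot + (1 - atot)/d) + ((d:ℝ) - 1) * Real.negMulLog ((1 - atot)/d)
      ≤ vNEntropy ((∑ k, (a k : ℂ) • (V k * ρ * (V k)ᴴ))
        + ((((1 - atot)/d : ℝ)) : ℂ) • 1) := by
  have hdR : (0:ℝ) < d := by exact_mod_cast hd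
  set m : ℝ := (1 - atot)/d with hm
  set M : ℝ := atot + m with hM
  have hm0 : 0 < m := div_pos (by linarith) hdR
  have hmM : m < M := by rw [hM]; linarith
  set S : Matrix (Fin d) (Fin d) ℂ := ∑ k, (a k : ℂ) • (V k * ρ * (V k)ᴴ) with hS
  have hSpsd : S.PosSemidef := by
    rw [hS]
    exact Finset.sum_induction _ _ (fun x y hx hy => hx.add hy) .zero
      (fun k _ => psd_smul (hρ.1.mul_mul_conjTranspose_same (V k)) (ha k).le)
  have hSum1 : (∑ k, (a k : ℂ) • (1 : Matrix (Fin d) (Fin d) ℂ)) = (atot : ℂ) • 1 := by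
    rw [← Finset.sum_smul]
    congr 1
    rw [hatot, Complex.ofReal_sum]
  have hS2 : ((atot : ℂ) • 1 - S).PosSemidef := by
    have hterm : ∀ k, (a k:ℂ) • (V k * (1 - ρ) * (V k)ᴴ)
        = (a k:ℂ) • (1 : Matrix (Fin d) (Fin d) ℂ) - (a k:ℂ) • (V k * ρ * (V k)ᴴ) := by
      intro k
      rw [Matrix.mul_sub, Matrix.mul_one, Matrix.sub_mul, (hV k).2, smul_sub]
    have heq : (atot : ℂ) • 1 - S = ∑ k, (a k:ℂ) • (V k * (1 - ρ) * (V k)ᴴ) := by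
      rw [Finset.sum_congr rfl fun k _ => hterm k, Finset.sum_sub_distrib, hSum1, hS]
    rw [heq]
    exact Finset.sum_induction _ _ (fun x y hx hy => hx.add hy) .zero
      (fun k _ => psd_smul ((one_sub_density hρ.1 hρ.2).mul_mul_conjTranspose_same (V k))
        (ha k).le)
  set σ : Matrix (Fin d) (Fin d) ℂ := S + ((m : ℝ) : ℂ) • 1 with hσ
  have hσherm : σ.IsHermitian := hSpsd.1.add (herm_real_smul_one m)
  have hlow : (σ - ((m:ℝ):ℂ) • 1).PosSemidef := by
    rw [hσ, add_sub_cancel_right]; exact hSpsd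
  have hhigh : (((M:ℝ):ℂ) • 1 - σ).PosSemidef := by
    have : ((M:ℝ):ℂ) • (1 : Matrix (Fin d) (Fin d) ℂ) - σ = (atot : ℂ) • 1 - S := by
      rw [hσ, hM]
      push_cast
      rw [add_smul]
      abel
    rw [this]; exact hS2
  have htr : σ.trace = 1 := by
    rw [hσ, Matrix.trace_add, Matrix.trace_smul, Matrix.trace_one, hS, Matrix.trace_sum]
    have hterm : ∀ k, ((a k : ℂ) • (V k * ρ * (V k)ᴴ)).trace = (a k : ℂ) := by
      intro k
      rw [Matrix.trace_smul, Matrix.trace_mul_cycle, (hV k).1,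
        Matrix.one_mul, hρ.2, smul_eq_mul, mul_one]
    rw [Finset.sum_congr rfl fun k _ => hterm k]
    have hcast : (∑ k, (a k : ℂ)) = (atot : ℂ) := by rw [hatot, Complex.ofReal_sum]
    rw [hcast]
    have hmr : m * (d:ℝ) = 1 - atot := by
      rw [hm]; field_simp
    have : ((m:ℝ):ℂ) • ((Fintype.card (Fin d) : ℂ)) = ((1 - atot : ℝ) : ℂ) := by
      rw [Fintype.card_fin, smul_eq_mul]
      rw [show ((d:ℕ):ℂ) = (((d:ℕ):ℝ):ℂ) by push_cast; ring]
      rw [← Complex.ofReal_mul, hmr]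
    rw [this]
    push_cast
    ring
  have hsum : ∑ i, hσherm.eigenvalues i = 1 := sum_eig_one hσherm htr
  have hge : ∀ i, m ≤ hσherm.eigenvalues i := fun i => Aux.eig_ge hσherm hlow i
  have hle : ∀ i, hσherm.eigenvalues i ≤ M := fun i => Aux.eig_le hσherm hhigh i
  have hconv : M + ((d:ℝ) - 1) * m = 1 := by
    rw [hM, hm]; field_simp; ring
  rw [vNEntropy_eq_sum hσherm]
  exact Aux2.chord hm0.le hmM _ hge hle hsum hconv

lemma vecMulVec_mulVec (x y z : Fin d → ℂ) :
    Matrix.vecMulVec x y *ᵥ z = (y ⬝ᵥ z) • x := by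
  ext i
  simp only [Matrix.mulVec, dotProduct, Matrix.vecMulVec_apply, Pi.smul_apply,
    smul_eq_mul]
  rw [Finset.sum_mul]
  exact Finset.sum_congr rfl fun k _ => by ring

lemma mul_vecMulVec (A : Matrix (Fin d) (Fin d) ℂ) (x y : Fin d → ℂ) :
    A * Matrix.vecMulVec x y = Matrix.vecMulVec (A *ᵥ x) y := by
  ext i j
  simp only [Matrix.mul_apply, Matrix.vecMulVec_apply, Matrix.mulVec, dotProduct,
    Finset.sum_mul]
  exact Finset.sum_congr rfl fun k _ => by ring

lemma vecMulVec_mul (A : Matrix (Fin d) (Fin d) ℂ) (x y : Fin d → ℂ) :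
    Matrix.vecMulVec x y * A = Matrix.vecMulVec x (y ᵥ* A) := by
  ext i j
  simp only [Matrix.mul_apply, Matrix.vecMulVec_apply, Matrix.vecMul, dotProduct,
    Finset.mul_sum]
  exact Finset.sum_congr rfl fun k _ => by ring

lemma conj_vecMulVec (A : Matrix (Fin d) (Fin d) ℂ) (x : Fin d → ℂ) :
    A * Matrix.vecMulVec x (star x) * Aᴴ
      = Matrix.vecMulVec (A *ᵥ x) (star (A *ᵥ x)) := by
  rw [mul_vecMulVec, vecMulVec_mul, ← Matrix.star_mulVec]

lemma vecMulVec_psd (x : Fin d → ℂ) : (Matrix.vecMulVec x (star x)).PosSemidef := by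
  refine Matrix.PosSemidef.of_dotProduct_mulVec_nonneg ?_ ?_
  · ext i j
    simp only [Matrix.conjTranspose_apply, Matrix.vecMulVec_apply, Pi.star_apply, star_mul',
      star_star]
    ring
  · intro y
    rw [vecMulVec_mulVec, dotProduct_smul, smul_eq_mul]
    have hsw : star y ⬝ᵥ x = star (star x ⬝ᵥ y) := by
      simp only [dotProduct, star_sum, star_mul', Pi.star_apply, star_star]
      exact Finset.sum_congr rfl fun k _ => by ring
    rw [hsw]
    exact mul_star_self_nonneg _

lemma trace_vecMulVec (x : Fin d → ℂ) (h : star x ⬝ᵥ x = 1) :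
    (Matrix.vecMulVec x (star x)).trace = 1 := by
  have h1 : (Matrix.vecMulVec x (star x)).trace = ∑ i, x i * star x i := by
    simp [Matrix.trace, Matrix.diag, Matrix.vecMulVec_apply]
  rw [h1, ← h, dotProduct]
  exact Finset.sum_congr rfl fun i _ => mul_comm _ _

lemma key_eq (hd : 0 < d) (atot : ℝ) (hatot0 : 0 < atot) (hatot1 : atot < 1)
    (ψ : Fin d → ℂ) (hψ : star ψ ⬝ᵥ ψ = 1) :
    vNEntropy ((atot : ℂ) • Matrix.vecMulVec ψ (star ψ) + (((1 - atot)/d : ℝ) : ℂ) • 1)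
      = Real.negMulLog (atot + (1 - atot)/d)
        + ((d:ℝ) - 1) * Real.negMulLog ((1 - atot)/d) := by
  have hdR : (0:ℝ) < d := by exact_mod_cast hd
  set m : ℝ := (1 - atot)/d with hm
  set M : ℝ := atot + m with hM
  have hm0 : 0 < m := div_pos (by linarith) hdR
  have hmM : m < M := by rw [hM]; linarith
  set P := Matrix.vecMulVec ψ (star ψ) with hP
  have hPψ : P *ᵥ ψ = ψ := by
    rw [hP, vecMulVec_mulVec, hψ, one_smul]
  have hPP : P * P = P := by
    conv_lhs => rw [hP, mul_vecMulVec, hPψ]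
  set σ : Matrix (Fin d) (Fin d) ℂ := (atot : ℂ) • P + ((m : ℝ) : ℂ) • 1 with hσ
  have hσherm : σ.IsHermitian :=
    (psd_smul (vecMulVec_psd ψ) hatot0.le).1.add (herm_real_smul_one m)
  have hquad : (σ - ((m:ℝ):ℂ) • 1) * (σ - ((M:ℝ):ℂ) • 1) = 0 := by
    have h1 : σ - ((m:ℝ):ℂ) • 1 = (atot:ℂ) • P := by rw [hσ, add_sub_cancel_right]
    have h2 : σ - ((M:ℝ):ℂ) • 1 = (atot:ℂ) • (P - 1) := by
      rw [hσ, hM]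
      push_cast
      rw [add_smul, smul_sub]
      abel
    rw [h1, h2, Matrix.smul_mul, Matrix.mul_smul, Matrix.mul_sub, Matrix.mul_one, hPP,
      sub_self, smul_zero, smul_zero]
  have htr : σ.trace = 1 := by
    rw [hσ, Matrix.trace_add, Matrix.trace_smul, Matrix.trace_smul, Matrix.trace_one,
      trace_vecMulVec ψ hψ]
    have hmr : m * (d:ℝ) = 1 - atot := by rw [hm]; field_simp
    have h3 : ((m:ℝ):ℂ) • ((Fintype.card (Fin d) : ℂ)) = ((1 - atot : ℝ) : ℂ) := by
      rw [Fintype.card_fin, smul_eq_mul]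
      rw [show ((d:ℕ):ℂ) = (((d:ℕ):ℝ):ℂ) by push_cast; ring]
      rw [← Complex.ofReal_mul, hmr]
    rw [h3]
    simp only [smul_eq_mul]
    push_cast
    ring
  have hsum : ∑ i, hσherm.eigenvalues i = 1 := sum_eig_one hσherm htr
  have hlam : ∀ i, hσherm.eigenvalues i = m ∨ hσherm.eigenvalues i = M :=
    fun i => Aux.eig_quad hσherm hquad i
  have hconv : M + ((d:ℝ) - 1) * m = 1 := by rw [hM, hm]; field_simp; ring
  rw [vNEntropy_eq_sum hσherm]
  exact Aux2.two_values hmM.ne _ hlam hsum hconv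


end Main
end AuxAll

open GenDep in
/-- the minimal output entropy of a generalized depolarizing channel whose
unitaries have a common unit eigenvector `ψ` is attained at `|ψ⟩⟨ψ|` and equals that of
the depolarizing channel with the same parameter. -/
theorem stmt_2 {d : ℕ} (hd : 0 < d) {ι : Type*} [Fintype ι]
    (a : ι → ℝ) (V : ι → Matrix (Fin d) (Fin d) ℂ) (atot : ℝ)
    (ha : ∀ k, 0 < a k) (hatot : atot = ∑ k, a k)
    (hatot0 : 0 < atot) (hatot1 : atot < 1)
    (hV : ∀ k, IsUnitary (V k))
    (Φ : Matrix (Fin d) (Fin d) ℂ → Matrix (Fin d) (Fin d) ℂ)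
    (hΦ : ∀ ρ, Φ ρ =
      (∑ k, (a k : ℂ) • (V k * ρ * (V k)ᴴ)) +
        ((((1 : ℝ) - atot : ℝ) : ℂ) / d * ρ.trace) • 1)
    (ψ : Fin d → ℂ) (hψ : star ψ ⬝ᵥ ψ = 1)
    (hcommon : ∀ k, ∃ c : ℂ, (V k).mulVec ψ = c • ψ) :
    vNEntropy (Φ (Matrix.vecMulVec ψ (star ψ))) = minOutputEntropy Φ ∧
      minOutputEntropy Φ = minOutputEntropy (depolarizing d atot) := by
  
  classical
  have hdC : ((d:ℕ):ℂ) ≠ 0 := by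
    exact_mod_cast Nat.cast_ne_zero.mpr hd.ne'
  set m : ℝ := (1 - atot)/d with hm
  set M : ℝ := atot + m with hM
  set E : ℝ := Real.negMulLog M + ((d:ℝ) - 1) * Real.negMulLog m with hE
  set P : Matrix (Fin d) (Fin d) ℂ := Matrix.vecMulVec ψ (star ψ) with hP
  have hPdens : IsDensityMatrix P := ⟨Main.vecMulVec_psd ψ, Main.trace_vecMulVec ψ hψ⟩
  have hcast : ((((1:ℝ) - atot : ℝ)) : ℂ) / (d:ℕ) = (((1 - atot)/d : ℝ) : ℂ) := by
    push_cast
    ring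
  have hform : ∀ ρ : Matrix (Fin d) (Fin d) ℂ, IsDensityMatrix ρ →
      Φ ρ = (∑ k, (a k : ℂ) • (V k * ρ * (V k)ᴴ)) + ((((1 - atot)/d : ℝ)) : ℂ) • 1 := by
    intro ρ hρ
    rw [hΦ ρ, hρ.2, mul_one, hcast]
  have hsumcast : (∑ k, (a k : ℂ)) = (atot : ℂ) := by
    rw [hatot, Complex.ofReal_sum]
  have hΦP : Φ P = (atot : ℂ) • P + (((1 - atot)/d : ℝ) : ℂ) • 1 := by
    rw [hform P hPdens]
    congr 1
    have hterm : ∀ k, V k * P * (V k)ᴴ = P := by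
      intro k
      obtain ⟨c, hc⟩ := hcommon k
      have h2 : star ((V k) *ᵥ ψ) ⬝ᵥ ((V k) *ᵥ ψ) = 1 := by
        rw [Matrix.star_mulVec, Matrix.dotProduct_mulVec, Matrix.vecMul_vecMul, (hV k).1,
          Matrix.vecMul_one, hψ]
      have hcc : star c * c = 1 := by
        rw [hc] at h2
        rw [← h2, star_smul, smul_dotProduct, dotProduct_smul, hψ,
          smul_eq_mul, smul_eq_mul, mul_one]
      rw [hP, Main.conj_vecMulVec, hc]
      ext i j
      simp only [Matrix.vecMulVec_apply, Pi.smul_apply, Pi.star_apply, star_smul,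
        smul_eq_mul]
      have : c * ψ i * (star c * star (ψ j)) = (star c * c) * (ψ i * star (ψ j)) := by ring
      rw [this, hcc, one_mul]
    rw [Finset.sum_congr rfl fun k _ => by rw [hterm k], ← Finset.sum_smul, hsumcast]
  have hkeyeq := Main.key_eq hd atot hatot0 hatot1 ψ hψ
  have hEΦP : vNEntropy (Φ P) = E := by
    rw [hΦP, hE, hM, hm]
    exact hkeyeq
  have hlbΦ : ∀ x ∈ {x | ∃ ρ, IsDensityMatrix ρ ∧ x = vNEntropy (Φ ρ)}, E ≤ x := by
    rintro x ⟨ρ, hρ, rfl⟩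
    rw [hform ρ hρ, hE, hM, hm]
    exact Main.key_lb hd a V atot ha hatot hatot0 hatot1 hV ρ hρ
  have hmemΦ : E ∈ {x | ∃ ρ, IsDensityMatrix ρ ∧ x = vNEntropy (Φ ρ)} :=
    ⟨P, hPdens, hEΦP.symm⟩
  have hminΦ : minOutputEntropy Φ = E := by
    rw [minOutputEntropy]
    exact le_antisymm (csInf_le ⟨E, hlbΦ⟩ hmemΦ) (le_csInf ⟨E, hmemΦ⟩ hlbΦ)
  have hformΓ : ∀ ρ : Matrix (Fin d) (Fin d) ℂ, IsDensityMatrix ρ →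
      depolarizing d atot ρ
        = (∑ _k : Fin 1, (atot : ℂ) • ((1 : Matrix (Fin d) (Fin d) ℂ) * ρ
            * (1 : Matrix (Fin d) (Fin d) ℂ)ᴴ)) + ((((1 - atot)/d : ℝ)) : ℂ) • 1 := by
    intro ρ hρ
    rw [depolarizing, hρ.2, mul_one, hcast]
    congr 1
    simp [Matrix.conjTranspose_one]
  have hlbΓ : ∀ x ∈ {x | ∃ ρ, IsDensityMatrix ρ ∧ x = vNEntropy (depolarizing d atot ρ)},
      E ≤ x := by
    rintro x ⟨ρ, hρ, rfl⟩
    rw [hformΓ ρ hρ, hE, hM, hm]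
    exact Main.key_lb hd (fun _ : Fin 1 => atot) (fun _ => 1) atot (fun _ => hatot0)
      (by simp) hatot0 hatot1
      (fun _ => ⟨by simp [Matrix.conjTranspose_one], by simp [Matrix.conjTranspose_one]⟩) ρ hρ
  have hmemΓ : E ∈ {x | ∃ ρ, IsDensityMatrix ρ ∧ x = vNEntropy (depolarizing d atot ρ)} := by
    refine ⟨P, hPdens, ?_⟩
    rw [hformΓ P hPdens]
    have h1 : (∑ _k : Fin 1, (atot : ℂ) • ((1 : Matrix (Fin d) (Fin d) ℂ) * P
        * (1 : Matrix (Fin d) (Fin d) ℂ)ᴴ)) = (atot : ℂ) • P := by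
      simp [Matrix.conjTranspose_one]
    rw [h1, hP]
    rw [hE, hM, hm]
    exact hkeyeq.symm
  have hminΓ : minOutputEntropy (depolarizing d atot) = E := by
    rw [minOutputEntropy]
    exact le_antisymm (csInf_le ⟨E, hlbΓ⟩ hmemΓ) (le_csInf ⟨E, hmemΓ⟩ hlbΓ)
  exact ⟨by rw [hminΦ]; exact hEΦP, by rw [hminΦ, hminΓ]⟩
end
end

section
/- Let Ω be a channel on d×d complex matrices and let Ω̂ denote its adjoint with respect to the Hilbert–Schmidt inner product ⟨A, B⟩ = Tr(A†B). Let A be a positive definite d×d matrix and ρ a density matrix such that Ω(ρ) is positive definite. Let ψ be a unit eigenvector of the Hermitian matrix Ω̂(log Ω(ρ) − log A) corresponding to its largest eigenvalue. Then H(Ω(|ψ⟩⟨ψ|), A) ≥ H(Ω(ρ), A). -/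
open scoped BigOperators Matrix Kronecker ComplexOrder

noncomputable section

noncomputable section AuxStmt9

open Matrix GenDep

namespace AuxStmt9

variable {n : Type*} [Fintype n] [DecidableEq n]

lemma rclike_ofReal (x : ℝ) : (RCLike.ofReal x : ℂ) = (x : ℂ) := rfl

lemma matLog_of_isHermitian {A : Matrix n n ℂ} (hA : A.IsHermitian) :
    matLog A = (hA.eigenvectorUnitary : Matrix n n ℂ) *
      Matrix.diagonal (fun i => (Real.log (hA.eigenvalues i) : ℂ)) *
      star (hA.eigenvectorUnitary : Matrix n n ℂ) := by
  rw [matLog, dif_pos hA]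

lemma conj_diag_isHermitian (U : Matrix n n ℂ) (v : n → ℝ) :
    (U * Matrix.diagonal (fun i => (v i : ℂ)) * star U).IsHermitian := by
  rw [Matrix.star_eq_conjTranspose]
  exact Matrix.isHermitian_mul_mul_conjTranspose U
    (Matrix.isHermitian_diagonal_iff.mpr fun i => Complex.conj_ofReal (v i))

lemma conj_diag_psd (U : Matrix n n ℂ) (v : n → ℝ) (hv : ∀ i, 0 ≤ v i) :
    (U * Matrix.diagonal (fun i => (v i : ℂ)) * star U).PosSemidef := by
  rw [Matrix.star_eq_conjTranspose]
  exact (Matrix.posSemidef_diagonal_iff.mpr fun i =>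
    Complex.zero_le_real.mpr (hv i)).mul_mul_conjTranspose_same U

lemma matLog_isHermitian (A : Matrix n n ℂ) : (matLog A).IsHermitian := by
  rw [matLog]
  split
  · exact conj_diag_isHermitian _ _
  · exact Matrix.isHermitian_zero

lemma eq_of_trace_mul_eq (X Y : Matrix n n ℂ)
    (h : ∀ B, (X * B).trace = (Y * B).trace) : X = Y := by
  ext i j
  have := h (Matrix.single j i 1)
  simpa [Matrix.trace, Matrix.mul_apply, Matrix.single, Matrix.diag, ite_and] using this

lemma trace_diag (W : Matrix n n ℂ) (a b : n → ℂ) :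
    (Matrix.diagonal a * W * Matrix.diagonal b * Wᴴ).trace
      = ∑ i, ∑ j, a i * b j * (W i j * star (W i j)) := by
  have key : ∀ i j, (Matrix.diagonal a * W * Matrix.diagonal b) i j = a i * W i j * b j := by
    intro i j
    rw [Matrix.mul_diagonal, Matrix.diagonal_mul]
  simp only [Matrix.trace, Matrix.diag, Matrix.mul_apply, key, Matrix.conjTranspose_apply]
  refine Finset.sum_congr rfl fun i _ => Finset.sum_congr rfl fun j _ => ?_
  simp [Matrix.star_apply]
  ring

lemma trace_conj_pair (U V : Matrix n n ℂ) (a b : n → ℂ) :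
    ((U * Matrix.diagonal a * star U) * (V * Matrix.diagonal b * star V)).trace
      = ∑ i, ∑ j, a i * b j * ((star U * V) i j * star ((star U * V) i j)) := by
  rw [← trace_diag (star U * V) a b]
  have h : (star U * V)ᴴ = star V * U := by
    rw [← Matrix.star_eq_conjTranspose, StarMul.star_mul, star_star]
  rw [h]
  simp only [Matrix.mul_assoc]
  rw [Matrix.trace_mul_comm]
  simp only [Matrix.mul_assoc]

lemma trace_conj_pair_self (U : Matrix n n ℂ) (hU : star U * U = 1) (a b : n → ℂ) :
    ((U * Matrix.diagonal a * star U) * (U * Matrix.diagonal b * star U)).trace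
      = ∑ i, a i * b i := by
  have e : (U * Matrix.diagonal a * star U) * (U * Matrix.diagonal b * star U)
      = U * (Matrix.diagonal a * Matrix.diagonal b) * star U := by
    simp only [Matrix.mul_assoc]
    rw [← Matrix.mul_assoc (star U) U, hU, Matrix.one_mul]
  rw [e, Matrix.diagonal_mul_diagonal, Matrix.trace_mul_cycle, hU,
    Matrix.one_mul, Matrix.trace_diagonal]

lemma psd_trace_nonneg {X : Matrix n n ℂ} (hX : X.PosSemidef) : 0 ≤ X.trace := by
  apply Finset.sum_nonneg
  intro i _
  have h := hX.dotProduct_mulVec_nonneg (Pi.single i 1)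
  simpa [dotProduct, Matrix.mulVec_single, Pi.single_apply, apply_ite] using h

lemma trace_mul_psd_nonneg {P Q : Matrix n n ℂ} (hP : P.PosSemidef) (hQ : Q.PosSemidef) :
    0 ≤ (P * Q).trace := by
  obtain ⟨B, rfl⟩ : ∃ B : Matrix n n ℂ, P = Bᴴ * B := by
    open scoped MatrixOrder in
    refine ⟨CFC.sqrt P, ?_⟩
    open scoped MatrixOrder in
    have h0 : 0 ≤ CFC.sqrt P := CFC.sqrt_nonneg P
    open scoped MatrixOrder in
    rw [(Matrix.nonneg_iff_posSemidef.mp h0).1.eq, CFC.sqrt_mul_sqrt_self P hP.nonneg]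
  rw [← Matrix.trace_mul_cycle B Q Bᴴ]
  exact psd_trace_nonneg (hQ.mul_mul_conjTranspose_same B)

lemma smul_one_sub_psd {M : Matrix n n ℂ} (hM : M.IsHermitian) (lam : ℝ)
    (h : ∀ i, hM.eigenvalues i ≤ lam) :
    ((lam : ℂ) • (1 : Matrix n n ℂ) - M).PosSemidef := by
  set U : Matrix n n ℂ := (hM.eigenvectorUnitary : Matrix n n ℂ) with hUdef
  have hUU' : U * star U = 1 := by
    rw [hUdef, ← Unitary.coe_star, Unitary.coe_mul_star_self]
  have h1 : (lam : ℂ) • (1 : Matrix n n ℂ)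
      = U * Matrix.diagonal (fun _ => (lam : ℂ)) * star U := by
    rw [← Matrix.smul_one_eq_diagonal]
    rw [Matrix.mul_smul, Matrix.mul_one, Matrix.smul_mul, hUU']
  have h2 : (lam : ℂ) • (1 : Matrix n n ℂ) - M
      = U * Matrix.diagonal (fun i => ((lam - hM.eigenvalues i : ℝ) : ℂ)) * star U := by
    conv_lhs => rw [h1, hM.spectral_theorem, Unitary.conjStarAlgAut_apply]
    rw [← Matrix.sub_mul, ← Matrix.mul_sub, Matrix.diagonal_sub]
    have hfun : Matrix.diagonal (fun i => (lam : ℂ) - (RCLike.ofReal ∘ hM.eigenvalues) i)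
        = Matrix.diagonal (fun i => ((lam - hM.eigenvalues i : ℝ) : ℂ)) :=
      congrArg Matrix.diagonal (funext fun i => by
        show (lam : ℂ) - (hM.eigenvalues i : ℂ) = ((lam - hM.eigenvalues i : ℝ) : ℂ)
        push_cast; ring)
    rw [hfun]
  rw [h2]
  exact conj_diag_psd U _ fun i => sub_nonneg.mpr (h i)

lemma klein_core (p q : n → ℝ) (P : n → n → ℝ) (hp : ∀ i, 0 ≤ p i) (hq : ∀ j, 0 < q j)
    (hP : ∀ i j, 0 ≤ P i j) (hrow : ∀ i, ∑ j, P i j = 1) (hcol : ∀ j, ∑ i, P i j = 1)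
    (hp1 : ∑ i, p i = 1) (hq1 : ∑ j, q j = 1) :
    0 ≤ (∑ i, p i * Real.log (p i)) - ∑ i, ∑ j, p i * Real.log (q j) * P i j := by
  classical
  set r : n → ℝ := fun i => ∑ j, P i j * q j with hrdef
  have hrpos : ∀ i, 0 < r i := by
    intro i
    have h1 := hrow i
    have h2 : ∃ j, P i j ≠ 0 := by
      by_contra hc
      push_neg at hc
      rw [Finset.sum_congr rfl fun j _ => hc j] at h1
      simp at h1
    obtain ⟨j, hj⟩ := h2
    exact Finset.sum_pos' (fun k _ => mul_nonneg (hP i k) (hq k).le)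
      ⟨j, Finset.mem_univ j, mul_pos (lt_of_le_of_ne (hP i j) (Ne.symm hj)) (hq j)⟩
  have hjensen : ∀ i, ∑ j, P i j * Real.log (q j) ≤ Real.log (r i) := by
    intro i
    have hcc := strictConcaveOn_log_Ioi.concaveOn.le_map_sum
      (w := fun j => P i j) (p := q) (t := Finset.univ)
      (fun j _ => hP i j) (hrow i) (fun j _ => Set.mem_Ioi.mpr (hq j))
    simpa [smul_eq_mul] using hcc
  have hpt : ∀ i, p i - r i ≤ p i * Real.log (p i) - p i * Real.log (r i) := by
    intro i
    rcases eq_or_lt_of_le (hp i) with h0 | h0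
    · rw [← h0]
      simp
      linarith [hrpos i]
    · have hlog := Real.log_le_sub_one_of_pos (div_pos (hrpos i) h0)
      rw [Real.log_div (hrpos i).ne' h0.ne'] at hlog
      have h2 : p i * (Real.log (r i) - Real.log (p i)) ≤ p i * (r i / p i - 1) :=
        mul_le_mul_of_nonneg_left hlog h0.le
      have h3 : p i * (r i / p i - 1) = r i - p i := by field_simp
      rw [h3, mul_sub] at h2
      linarith
  have hr1 : ∑ i, r i = 1 := by
    rw [hrdef]
    rw [Finset.sum_comm]
    have hstep : ∀ j, ∑ i, P i j * q j = q j := by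
      intro j
      rw [← Finset.sum_mul, hcol j, one_mul]
    rw [Finset.sum_congr rfl fun j _ => hstep j]
    exact hq1
  have hs2 : ∑ i, ∑ j, p i * Real.log (q j) * P i j ≤ ∑ i, p i * Real.log (r i) := by
    refine Finset.sum_le_sum fun i _ => ?_
    have h1 : ∑ j, p i * Real.log (q j) * P i j
        = p i * ∑ j, P i j * Real.log (q j) := by
      rw [Finset.mul_sum]
      exact Finset.sum_congr rfl fun j _ => by ring
    rw [h1]
    exact mul_le_mul_of_nonneg_left (hjensen i) (hp i)
  have hs3 : ∑ i, (p i - r i) ≤ ∑ i, (p i * Real.log (p i) - p i * Real.log (r i)) :=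
    Finset.sum_le_sum fun i _ => hpt i
  rw [Finset.sum_sub_distrib, Finset.sum_sub_distrib, hp1, hr1] at hs3
  linarith

lemma trace_eq_sum_eigenvalues {A : Matrix n n ℂ} (hA : A.IsHermitian) :
    A.trace = ∑ i, (hA.eigenvalues i : ℂ) := by
  conv_lhs => rw [hA.spectral_theorem, Unitary.conjStarAlgAut_apply]
  rw [Matrix.trace_mul_cycle, Unitary.coe_star_mul_self,
    Matrix.one_mul, Matrix.trace_diagonal]
  rfl

lemma relEntropyR_nonneg {σ τ : Matrix n n ℂ} (hσ : σ.PosSemidef) (hτ : τ.PosDef)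
    (hσ1 : σ.trace = 1) (hτ1 : τ.trace = 1) : 0 ≤ relEntropyR σ τ := by
  classical
  have hσh : σ.IsHermitian := hσ.1
  have hτh : τ.IsHermitian := hτ.1
  have hUU : star (hσh.eigenvectorUnitary : Matrix n n ℂ) * (hσh.eigenvectorUnitary : Matrix n n ℂ) = 1 :=
    Unitary.coe_star_mul_self _
  have hUU' : (hσh.eigenvectorUnitary : Matrix n n ℂ) * star (hσh.eigenvectorUnitary : Matrix n n ℂ) = 1 := by
    rw [← Unitary.coe_star, Unitary.coe_mul_star_self]
  have hVV : star (hτh.eigenvectorUnitary : Matrix n n ℂ) * (hτh.eigenvectorUnitary : Matrix n n ℂ) = 1 :=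
    Unitary.coe_star_mul_self _
  have hVV' : (hτh.eigenvectorUnitary : Matrix n n ℂ) * star (hτh.eigenvectorUnitary : Matrix n n ℂ) = 1 := by
    rw [← Unitary.coe_star, Unitary.coe_mul_star_self]
  -- the doubly stochastic matrix
  set W : Matrix n n ℂ :=
    star (hσh.eigenvectorUnitary : Matrix n n ℂ) * (hτh.eigenvectorUnitary : Matrix n n ℂ)
    with hWdef
  have hWW' : W * star W = 1 := by
    rw [hWdef, StarMul.star_mul, star_star]
    calc star (hσh.eigenvectorUnitary : Matrix n n ℂ) * (hτh.eigenvectorUnitary : Matrix n n ℂ) *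
          (star (hτh.eigenvectorUnitary : Matrix n n ℂ) * (hσh.eigenvectorUnitary : Matrix n n ℂ))
        = star (hσh.eigenvectorUnitary : Matrix n n ℂ) *
          ((hτh.eigenvectorUnitary : Matrix n n ℂ) * star (hτh.eigenvectorUnitary : Matrix n n ℂ)) *
          (hσh.eigenvectorUnitary : Matrix n n ℂ) := by
          simp only [Matrix.mul_assoc]
      _ = 1 := by rw [hVV', Matrix.mul_one, hUU]
  have hWW : star W * W = 1 := by
    rw [hWdef, StarMul.star_mul, star_star]
    calc star (hτh.eigenvectorUnitary : Matrix n n ℂ) * (hσh.eigenvectorUnitary : Matrix n n ℂ) *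
          (star (hσh.eigenvectorUnitary : Matrix n n ℂ) * (hτh.eigenvectorUnitary : Matrix n n ℂ))
        = star (hτh.eigenvectorUnitary : Matrix n n ℂ) *
          ((hσh.eigenvectorUnitary : Matrix n n ℂ) * star (hσh.eigenvectorUnitary : Matrix n n ℂ)) *
          (hτh.eigenvectorUnitary : Matrix n n ℂ) := by
          simp only [Matrix.mul_assoc]
      _ = 1 := by rw [hUU', Matrix.mul_one, hVV]
  have hrow : ∀ i, ∑ j, Complex.normSq (W i j) = 1 := by
    intro i
    have h1 : (W * star W) i i = (1 : Matrix n n ℂ) i i := by rw [hWW']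
    rw [Matrix.mul_apply] at h1
    simp only [Matrix.star_apply, Matrix.one_apply_eq, Complex.star_def] at h1
    have h2 : ∑ j, ((Complex.normSq (W i j) : ℂ)) = 1 := by
      refine Eq.trans ?_ h1
      exact Finset.sum_congr rfl fun j _ => (Complex.mul_conj (W i j)).symm
    exact_mod_cast h2
  have hcol : ∀ j, ∑ i, Complex.normSq (W i j) = 1 := by
    intro j
    have h1 : (star W * W) j j = (1 : Matrix n n ℂ) j j := by rw [hWW]
    rw [Matrix.mul_apply] at h1
    simp only [Matrix.star_apply, Matrix.one_apply_eq, Complex.star_def] at h1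
    have h2 : ∑ i, ((Complex.normSq (W i j) : ℂ)) = 1 := by
      refine Eq.trans ?_ h1
      refine Finset.sum_congr rfl fun i _ => ?_
      rw [mul_comm, Complex.mul_conj]
    exact_mod_cast h2
  have hp1 : ∑ i, hσh.eigenvalues i = 1 := by
    have h1 := trace_eq_sum_eigenvalues hσh
    rw [hσ1] at h1
    have h2 : ((∑ i, hσh.eigenvalues i : ℝ) : ℂ) = 1 := by push_cast; exact h1.symm
    exact_mod_cast h2
  have hq1 : ∑ j, hτh.eigenvalues j = 1 := by
    have h1 := trace_eq_sum_eigenvalues hτh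
    rw [hτ1] at h1
    have h2 : ((∑ i, hτh.eigenvalues i : ℝ) : ℂ) = 1 := by push_cast; exact h1.symm
    exact_mod_cast h2
  have T1 : (σ * matLog σ).trace = ∑ i, ((hσh.eigenvalues i * Real.log (hσh.eigenvalues i) : ℝ) : ℂ) := by
    rw [matLog_of_isHermitian hσh]
    nth_rewrite 1 [hσh.spectral_theorem]
    rw [Unitary.conjStarAlgAut_apply]
    rw [trace_conj_pair_self _ hUU]
    refine Finset.sum_congr rfl fun i _ => ?_
    simp only [Function.comp_apply, rclike_ofReal]
    push_cast
    ring
  have T2 : (σ * matLog τ).trace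
      = ∑ i, ∑ j, ((hσh.eigenvalues i * Real.log (hτh.eigenvalues j)
          * Complex.normSq (W i j) : ℝ) : ℂ) := by
    rw [matLog_of_isHermitian hτh]
    nth_rewrite 1 [hσh.spectral_theorem]
    rw [Unitary.conjStarAlgAut_apply]
    rw [trace_conj_pair]
    refine Finset.sum_congr rfl fun i _ => Finset.sum_congr rfl fun j _ => ?_
    simp only [Complex.star_def, Complex.mul_conj, Function.comp_apply, rclike_ofReal]
    push_cast
    ring
  have hRE : relEntropyR σ τ = (∑ i, hσh.eigenvalues i * Real.log (hσh.eigenvalues i))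
      - ∑ i, ∑ j, hσh.eigenvalues i * Real.log (hτh.eigenvalues j) * Complex.normSq (W i j) := by
    simp only [relEntropyR]
    rw [Matrix.mul_sub, Matrix.trace_sub, T1, T2]
    rw [show (∑ i, ((hσh.eigenvalues i * Real.log (hσh.eigenvalues i) : ℝ) : ℂ))
        = ((∑ i, hσh.eigenvalues i * Real.log (hσh.eigenvalues i) : ℝ) : ℂ) by push_cast; rfl]
    rw [show (∑ i, ∑ j, ((hσh.eigenvalues i * Real.log (hτh.eigenvalues j)
          * Complex.normSq (W i j) : ℝ) : ℂ))
        = ((∑ i, ∑ j, hσh.eigenvalues i * Real.log (hτh.eigenvalues j)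
          * Complex.normSq (W i j) : ℝ) : ℂ) by push_cast; rfl]
    rw [← Complex.ofReal_sub, Complex.ofReal_re]
  rw [hRE]
  exact klein_core _ _ _ (fun i => hσ.eigenvalues_nonneg i) (fun j => hτ.eigenvalues_pos j)
    (fun i j => Complex.normSq_nonneg _) hrow hcol hp1 hq1

variable {d : ℕ} {Ω : Matrix (Fin d) (Fin d) ℂ → Matrix (Fin d) (Fin d) ℂ}

lemma channel_map_sub (hΩ : IsChannel Ω) (A B : Matrix (Fin d) (Fin d) ℂ) :
    Ω (A - B) = Ω A - Ω B := by
  have h1 : Ω (A + (-1 : ℂ) • B) = Ω A + (-1 : ℂ) • Ω B := by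
    rw [hΩ.map_add, hΩ.map_smul]
  simpa [sub_eq_add_neg, neg_smul, one_smul] using h1

lemma channel_psd (hΩ : IsChannel Ω) {X : Matrix (Fin d) (Fin d) ℂ}
    (hX : X.PosSemidef) : (Ω X).PosSemidef := by
  have h1 : (X.submatrix (Prod.snd : Fin 1 × Fin d → Fin d) Prod.snd).PosSemidef :=
    hX.submatrix _
  have h2 := hΩ.cp 1 _ h1
  have h3 : Ω X = (tensorMap (id : Matrix (Fin 1) (Fin 1) ℂ → Matrix (Fin 1) (Fin 1) ℂ) Ω
      (X.submatrix Prod.snd Prod.snd)).submatrix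
      (fun j => ((0 : Fin 1), j)) (fun j => ((0 : Fin 1), j)) := by
    ext j l
    simp only [tensorMap, Matrix.submatrix_apply, Matrix.sum_apply, Fin.sum_univ_one,
      id_eq, Matrix.kroneckerMap_apply, Matrix.single_apply_same, one_mul]
    rfl
  rw [h3]
  exact h2.submatrix _

lemma channel_herm (hΩ : IsChannel Ω) {H : Matrix (Fin d) (Fin d) ℂ}
    (hH : H.IsHermitian) : (Ω H).IsHermitian := by
  have hdec : H = ((hH.eigenvectorUnitary : Matrix (Fin d) (Fin d) ℂ) *
        Matrix.diagonal (fun i => ((max (hH.eigenvalues i) 0 : ℝ) : ℂ)) *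
        star (hH.eigenvectorUnitary : Matrix (Fin d) (Fin d) ℂ))
      - ((hH.eigenvectorUnitary : Matrix (Fin d) (Fin d) ℂ) *
        Matrix.diagonal (fun i => ((max (-hH.eigenvalues i) 0 : ℝ) : ℂ)) *
        star (hH.eigenvectorUnitary : Matrix (Fin d) (Fin d) ℂ)) := by
    nth_rewrite 1 [hH.spectral_theorem]
    rw [Unitary.conjStarAlgAut_apply]
    rw [← Matrix.sub_mul, ← Matrix.mul_sub, Matrix.diagonal_sub]
    have hfun : Matrix.diagonal (fun i => ((max (hH.eigenvalues i) 0 : ℝ) : ℂ)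
          - ((max (-hH.eigenvalues i) 0 : ℝ) : ℂ))
        = Matrix.diagonal (RCLike.ofReal ∘ hH.eigenvalues) :=
      congrArg Matrix.diagonal (funext fun i => by
        rw [← Complex.ofReal_sub, max_zero_sub_max_neg_zero_eq_self]
        rfl)
    rw [hfun]
  have hpsd1 := channel_psd hΩ (conj_diag_psd (hH.eigenvectorUnitary : Matrix (Fin d) (Fin d) ℂ)
    (fun i => max (hH.eigenvalues i) 0) (fun i => le_max_right _ _))
  have hpsd2 := channel_psd hΩ (conj_diag_psd (hH.eigenvectorUnitary : Matrix (Fin d) (Fin d) ℂ)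
    (fun i => max (-hH.eigenvalues i) 0) (fun i => le_max_right _ _))
  rw [hdec, channel_map_sub hΩ]
  exact hpsd1.1.sub hpsd2.1

lemma channel_conjT (hΩ : IsChannel Ω) (B : Matrix (Fin d) (Fin d) ℂ) :
    Ω Bᴴ = (Ω B)ᴴ := by
  have hB1 : (B + Bᴴ).IsHermitian := by
    show (B + Bᴴ)ᴴ = B + Bᴴ
    rw [Matrix.conjTranspose_add, Matrix.conjTranspose_conjTranspose, add_comm]
  have hB2 : (Complex.I • (B - Bᴴ)).IsHermitian := by
    show (Complex.I • (B - Bᴴ))ᴴ = Complex.I • (B - Bᴴ)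
    rw [Matrix.conjTranspose_smul, Matrix.conjTranspose_sub,
      Matrix.conjTranspose_conjTranspose]
    rw [show (star Complex.I) = -Complex.I from Complex.conj_I]
    rw [neg_smul, ← smul_neg, neg_sub]
  have h1 := (channel_herm hΩ hB1).eq
  have h2 := (channel_herm hΩ hB2).eq
  have hrepBH : Bᴴ = (1/2 : ℂ) • ((B + Bᴴ) + Complex.I • (Complex.I • (B - Bᴴ))) := by
    rw [smul_smul, Complex.I_mul_I, neg_one_smul, ← sub_eq_add_neg]
    rw [show (B + Bᴴ) - (B - Bᴴ) = Bᴴ + Bᴴ from by abel]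
    rw [← two_smul ℂ Bᴴ, smul_smul]
    norm_num
  have hrepB : B = (1/2 : ℂ) • ((B + Bᴴ) + (-Complex.I) • (Complex.I • (B - Bᴴ))) := by
    rw [smul_smul]
    rw [show (-Complex.I) * Complex.I = 1 from by
      rw [neg_mul, Complex.I_mul_I, neg_neg]]
    rw [one_smul]
    rw [show (B + Bᴴ) + (B - Bᴴ) = B + B from by abel]
    rw [← two_smul ℂ B, smul_smul]
    norm_num
  calc Ω Bᴴ = (1/2 : ℂ) • (Ω (B + Bᴴ) + Complex.I • Ω (Complex.I • (B - Bᴴ))) := by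
        conv_lhs => rw [hrepBH]
        rw [hΩ.map_smul, hΩ.map_add, hΩ.map_smul]
    _ = (Ω B)ᴴ := by
        conv_rhs => rw [hrepB, hΩ.map_smul, hΩ.map_add, hΩ.map_smul]
        rw [Matrix.conjTranspose_smul, Matrix.conjTranspose_add, Matrix.conjTranspose_smul]
        rw [h1, h2]
        rw [show star ((1 : ℂ)/2) = ((1 : ℂ)/2) from by simp]
        rw [show star (-Complex.I) = Complex.I from by
          rw [star_neg, show star Complex.I = -Complex.I from Complex.conj_I, neg_neg]]

lemma vecMulVec_psd (ψ : Fin d → ℂ) : (Matrix.vecMulVec ψ (star ψ)).PosSemidef := by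
  have h : Matrix.vecMulVec ψ (star ψ) = Matrix.replicateCol Unit ψ * (Matrix.replicateCol Unit ψ)ᴴ := by
    ext i j
    simp [Matrix.mul_apply, Matrix.vecMulVec_apply, Matrix.replicateCol_apply,
      Matrix.conjTranspose_apply]
  rw [h]
  exact Matrix.posSemidef_self_mul_conjTranspose _

end AuxStmt9

end AuxStmt9

open GenDep in
/-- Shor's optimization step: if `ψ` is a unit eigenvector for the
largest eigenvalue of `Ω̂(log Ω(ρ) - log A)`, then
`H(Ω(|ψ⟩⟨ψ|), A) ≥ H(Ω(ρ), A)`. -/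
theorem stmt_9 {d : ℕ}
    (Ω Ωhat : Matrix (Fin d) (Fin d) ℂ → Matrix (Fin d) (Fin d) ℂ)
    (hΩ : IsChannel Ω)
    (hAdj : ∀ A B : Matrix (Fin d) (Fin d) ℂ,
      Matrix.trace (Aᴴ * Ω B) = Matrix.trace ((Ωhat A)ᴴ * B))
    (A : Matrix (Fin d) (Fin d) ℂ) (hA : A.PosDef)
    (ρ : Matrix (Fin d) (Fin d) ℂ) (hρ : IsDensityMatrix ρ)
    (hΩρ : (Ω ρ).PosDef)
    (lam : ℝ) (ψ : Fin d → ℂ) (hψ : star ψ ⬝ᵥ ψ = 1)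
    (hψeig : (Ωhat (matLog (Ω ρ) - matLog A)).mulVec ψ = (lam : ℂ) • ψ)
    (hlam : ∀ (x : Fin d → ℂ) (μ : ℝ), x ≠ 0 →
      (Ωhat (matLog (Ω ρ) - matLog A)).mulVec x = (μ : ℂ) • x → μ ≤ lam) :
    relEntropyR (Ω ρ) A ≤ relEntropyR (Ω (Matrix.vecMulVec ψ (star ψ))) A := by
  classical
  open AuxStmt9 in
  set L : Matrix (Fin d) (Fin d) ℂ := matLog (Ω ρ) - matLog A with hLdef
  set M : Matrix (Fin d) (Fin d) ℂ := Ωhat L with hMdef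
  have hL : L.IsHermitian := (AuxStmt9.matLog_isHermitian _).sub (AuxStmt9.matLog_isHermitian _)
  -- adjoint identity
  have hadj : ∀ B, (L * Ω B).trace = (Mᴴ * B).trace := by
    intro B
    have h := hAdj L B
    rwa [hL.eq] at h
  -- M is Hermitian
  have hMh : M.IsHermitian := by
    apply AuxStmt9.eq_of_trace_mul_eq
    intro B
    rw [← hadj B]
    have e1 : (M * B).trace = star ((Mᴴ * Bᴴ).trace) := by
      rw [← Matrix.trace_conjTranspose, Matrix.conjTranspose_mul]
      simp only [Matrix.conjTranspose_conjTranspose]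
      rw [Matrix.trace_mul_comm]
    rw [e1, ← hadj Bᴴ, AuxStmt9.channel_conjT hΩ B]
    have e2 : L * (Ω B)ᴴ = (Ω B * L)ᴴ := by
      rw [Matrix.conjTranspose_mul, hL.eq]
    rw [e2, Matrix.trace_conjTranspose, star_star, Matrix.trace_mul_comm]
  have hadjM : ∀ B, (L * Ω B).trace = (M * B).trace := by
    intro B
    rw [hadj B, hMh.eq]
  -- the pure state
  have hσpsd : (Matrix.vecMulVec ψ (star ψ)).PosSemidef := AuxStmt9.vecMulVec_psd ψ
  have hσtr : (Matrix.vecMulVec ψ (star ψ)).trace = 1 := by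
    rw [← hψ]
    simp only [Matrix.trace, Matrix.diag, Matrix.vecMulVec_apply, dotProduct,
      Pi.star_apply]
    exact Finset.sum_congr rfl fun i _ => mul_comm _ _
  have hΩσpsd : (Ω (Matrix.vecMulVec ψ (star ψ))).PosSemidef := AuxStmt9.channel_psd hΩ hσpsd
  have hΩσtr : (Ω (Matrix.vecMulVec ψ (star ψ))).trace = 1 := by
    rw [hΩ.trace_preserving, hσtr]
  have hΩρtr : (Ω ρ).trace = 1 := by
    rw [hΩ.trace_preserving, hρ.2]
  -- Klein inequality
  have hklein : 0 ≤ relEntropyR (Ω (Matrix.vecMulVec ψ (star ψ))) (Ω ρ) :=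
    AuxStmt9.relEntropyR_nonneg hΩσpsd hΩρ hΩσtr hΩρtr
  -- trace of M against the pure state
  have hMσmat : M * Matrix.vecMulVec ψ (star ψ) = Matrix.vecMulVec (M *ᵥ ψ) (star ψ) := by
    ext i j
    simp only [Matrix.mul_apply, Matrix.vecMulVec_apply, Matrix.mulVec, dotProduct]
    rw [Finset.sum_mul]
    exact Finset.sum_congr rfl fun k _ => by ring
  have hMσ : (M * Matrix.vecMulVec ψ (star ψ)).trace = (lam : ℂ) := by
    rw [hMσmat, hψeig]
    have e : Matrix.vecMulVec ((lam : ℂ) • ψ) (star ψ)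
        = (lam : ℂ) • Matrix.vecMulVec ψ (star ψ) := by
      ext i j
      simp only [Matrix.vecMulVec_apply, Pi.smul_apply, Matrix.smul_apply, smul_eq_mul]
      ring
    rw [e, Matrix.trace_smul, hσtr, smul_eq_mul, mul_one]
  -- eigenvalue bound
  have hev : ∀ i, hMh.eigenvalues i ≤ lam := by
    intro i
    have hne : (⇑(hMh.eigenvectorBasis i) : Fin d → ℂ) ≠ 0 := by
      intro hc
      exact hMh.eigenvectorBasis.orthonormal.ne_zero i (by ext k; exact congrFun hc k)
    apply hlam _ _ hne
    rw [hMh.mulVec_eigenvectorBasis i]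
    ext k
    simp [Complex.real_smul]
  have hpsdmax := AuxStmt9.smul_one_sub_psd hMh lam hev
  have hbound : ((M * ρ).trace).re ≤ lam := by
    have h0 := AuxStmt9.trace_mul_psd_nonneg hpsdmax hρ.1
    have hsplit : ((lam : ℂ) • (1 : Matrix (Fin d) (Fin d) ℂ) - M) * ρ
        = (lam : ℂ) • ρ - M * ρ := by
      rw [Matrix.sub_mul, Matrix.smul_mul, Matrix.one_mul]
    rw [hsplit, Matrix.trace_sub, Matrix.trace_smul, hρ.2, smul_eq_mul, mul_one] at h0
    rw [Complex.le_def] at h0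
    have := h0.1
    simp only [Complex.zero_re, Complex.sub_re, Complex.ofReal_re] at this
    linarith
  -- entropy identities
  have hErho : relEntropyR (Ω ρ) A = ((M * ρ).trace).re := by
    simp only [relEntropyR]
    rw [← hLdef, Matrix.trace_mul_comm, hadjM ρ]
  have hEσ : relEntropyR (Ω (Matrix.vecMulVec ψ (star ψ))) A
      = relEntropyR (Ω (Matrix.vecMulVec ψ (star ψ))) (Ω ρ) + lam := by
    simp only [relEntropyR]
    have key : (Ω (Matrix.vecMulVec ψ (star ψ)) * (matLog (Ω (Matrix.vecMulVec ψ (star ψ))) - matLog A)).trace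
        = (Ω (Matrix.vecMulVec ψ (star ψ)) * (matLog (Ω (Matrix.vecMulVec ψ (star ψ))) - matLog (Ω ρ))).trace
          + (L * Ω (Matrix.vecMulVec ψ (star ψ))).trace := by
      rw [hLdef, Matrix.trace_mul_comm]
      simp only [Matrix.mul_sub, Matrix.sub_mul, Matrix.trace_sub]
      simp only [Matrix.trace_mul_comm (Ω (Matrix.vecMulVec ψ (star ψ)))]
      ring
    rw [key, hadjM _, hMσ]
    simp
  rw [hErho, hEσ]
  linarith
end
end

section
/- Let d ≥ 2, 0 < a < 1, p > 1, and let x_1 ≥ x_2 ≥ … ≥ x_d ≥ 0 satisfy Σ_{i=1}^d x_i = 1 and x_1 < 1. Then Σ_{i=1}^d (a x_i + (1−a)/d)^p < (a + (1−a)/d)^p + (d−1)((1−a)/d)^p. -/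
open scoped BigOperators Matrix Kronecker ComplexOrder

noncomputable section

open GenDep in
/-- the strict `p`-th power sum inequality underlying the strict output
norm bound for generalized depolarizing channels. -/
theorem stmt_11 {d : ℕ} (hd : 2 ≤ d) (a p : ℝ) (ha0 : 0 < a) (ha1 : a < 1)
    (hp : 1 < p) (x : Fin d → ℝ) (hmono : Antitone x) (hpos : ∀ i, 0 ≤ x i)
    (hsum : ∑ i, x i = 1) (hx1 : x ⟨0, by omega⟩ < 1) :
    ∑ i, (a * x i + (1 - a) / d) ^ p <
      (a + (1 - a) / d) ^ p + ((d : ℝ) - 1) * ((1 - a) / d) ^ p := by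
  have hdpos : (0 : ℝ) < d := by exact_mod_cast Nat.lt_of_lt_of_le (by norm_num) hd
  set c : ℝ := (1 - a) / d with hc
  have hcpos : 0 < c := div_pos (by linarith) hdpos
  have hconv := strictConvexOn_rpow hp
  -- pointwise bound
  have key : ∀ t : ℝ, 0 ≤ t → t ≤ 1 → (a * t + c) ^ p ≤ (1 - t) * c ^ p + t * (a + c) ^ p := by
    intro t ht0 ht1
    have h := hconv.convexOn.2 (Set.mem_Ici.2 hcpos.le)
      (Set.mem_Ici.2 (by linarith : (0:ℝ) ≤ a + c))
      (show (0:ℝ) ≤ 1 - t by linarith) (show (0:ℝ) ≤ t from ht0)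
      (show (1 - t) + t = 1 by ring)
    simpa [smul_eq_mul, show (1 - t) * c + t * (a + c) = a * t + c by ring] using h
  have keys : ∀ t : ℝ, 0 < t → t < 1 → (a * t + c) ^ p < (1 - t) * c ^ p + t * (a + c) ^ p := by
    intro t ht0 ht1
    have h := hconv.2 (Set.mem_Ici.2 hcpos.le)
      (Set.mem_Ici.2 (by linarith : (0:ℝ) ≤ a + c)) (by intro h; linarith)
      (show (0:ℝ) < 1 - t by linarith) (show (0:ℝ) < t from ht0)
      (show (1 - t) + t = 1 by ring)
    simpa [smul_eq_mul, show (1 - t) * c + t * (a + c) = a * t + c by ring] using h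
  have hle1 : ∀ i, x i ≤ 1 := by
    intro i
    have := Finset.single_le_sum (f := x) (fun j _ => hpos j) (Finset.mem_univ i)
    linarith [this, hsum.ge]
  -- some index is strictly positive
  have hex : ∃ i, 0 < x i := by
    by_contra h
    push_neg at h
    have : ∑ i, x i = 0 := Finset.sum_eq_zero (fun i _ => le_antisymm (h i) (hpos i))
    rw [hsum] at this; norm_num at this
  obtain ⟨i0, hi0⟩ := hex
  have hi0lt : x i0 < 1 :=
    lt_of_le_of_lt (hmono (show (⟨0, by omega⟩ : Fin d) ≤ i0 from Fin.mk_le_of_le_val (Nat.zero_le _))) hx1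
  have hstrict : ∑ i, (a * x i + c) ^ p < ∑ i, ((1 - x i) * c ^ p + x i * (a + c) ^ p) := by
    apply Finset.sum_lt_sum (fun i _ => key (x i) (hpos i) (hle1 i))
    exact ⟨i0, Finset.mem_univ i0, keys (x i0) hi0 hi0lt⟩
  calc ∑ i, (a * x i + c) ^ p < ∑ i, ((1 - x i) * c ^ p + x i * (a + c) ^ p) := hstrict
    _ = ((d : ℝ) - ∑ i, x i) * c ^ p + (∑ i, x i) * (a + c) ^ p := by
        rw [Finset.sum_add_distrib, ← Finset.sum_mul, ← Finset.sum_mul,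
          Finset.sum_sub_distrib, Finset.sum_const, Finset.card_univ, Fintype.card_fin,
          nsmul_eq_mul, mul_one]
    _ = (a + c) ^ p + ((d : ℝ) - 1) * c ^ p := by rw [hsum]; ring
end
end

section
/- Let Φ be a generalized depolarizing channel on d×d complex matrices, Φ(ρ) = Σ_k a_k V_k ρ V_k† + (1−a)(Tr ρ)(1/d)I, in which all the unitary matrices V_k are diagonal in the standard basis {e_1, …, e_d}. Then Φ(|e_m⟩⟨e_m|) = a|e_m⟩⟨e_m| + (1−a)(1/d)I for each m, and C_Holv(Φ) = log d − S_min(Φ) = log d − S_min(Γ_a), where Γ_a is the depolarizing channel with the same parameter a. -/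
open scoped BigOperators Matrix Kronecker ComplexOrder

noncomputable section

section Aux

open GenDep Matrix Real Finset

/-- Sum of eigenvalues equals the trace. -/
lemma aux_trace_eq_sum_eig {d : ℕ} {A : Matrix (Fin d) (Fin d) ℂ} (hA : A.IsHermitian) :
    A.trace = ∑ i, (hA.eigenvalues i : ℂ) := by
  nth_rewrite 1 [hA.spectral_theorem]
  rw [Unitary.conjStarAlgAut_apply]
  rw [Matrix.trace_mul_cycle]
  rw [show (star (hA.eigenvectorUnitary : Matrix (Fin d) (Fin d) ℂ)) *
    (hA.eigenvectorUnitary : Matrix (Fin d) (Fin d) ℂ) = 1 from Unitary.coe_star_mul_self _,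
    one_mul]
  simp [Matrix.trace_diagonal]

/-- Eigenvalues of a Hermitian matrix whose shift by `c` is PSD are at least `c`. -/
lemma aux_eig_ge {d : ℕ} {A : Matrix (Fin d) (Fin d) ℂ} (hA : A.IsHermitian) {c : ℝ}
    (h : (A - (c : ℂ) • 1).PosSemidef) (i : Fin d) : c ≤ hA.eigenvalues i := by
  have hn : star (⇑(hA.eigenvectorBasis i)) ⬝ᵥ ⇑(hA.eigenvectorBasis i) = 1 := by
    rw [dotProduct_comm, ← EuclideanSpace.inner_eq_star_dotProduct, inner_self_eq_norm_sq_to_K,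
      hA.eigenvectorBasis.orthonormal.1 i]
    norm_num
  have h0 := h.re_dotProduct_nonneg (⇑(hA.eigenvectorBasis i))
  rw [sub_mulVec, smul_mulVec, one_mulVec, dotProduct_sub, dotProduct_smul, hn,
    map_sub] at h0
  have he := hA.eigenvalues_eq i
  have hc : RCLike.re ((c : ℂ) * 1) = c := by simp
  rw [smul_eq_mul, hc, ← he] at h0
  linarith

/-- Eigenvalues of a Hermitian matrix annihilated by `(X - x)(X - y)` are `x` or `y`. -/
lemma aux_eig_mem {d : ℕ} {A : Matrix (Fin d) (Fin d) ℂ} (hA : A.IsHermitian) {x y : ℝ}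
    (h : (A - (x : ℂ) • 1) * (A - (y : ℂ) • 1) = 0) (i : Fin d) :
    hA.eigenvalues i = x ∨ hA.eigenvalues i = y := by
  set v := ⇑(hA.eigenvectorBasis i) with hv
  have hvne : v ≠ 0 := by
    intro h0
    apply hA.eigenvectorBasis.orthonormal.ne_zero i
    ext j
    exact congrFun h0 j
  have hmv : A *ᵥ v = ((hA.eigenvalues i : ℂ)) • v := by
    rw [hA.mulVec_eigenvectorBasis i, RCLike.real_smul_eq_coe_smul (K := ℂ)]; rfl
  have h1 : (A - (y : ℂ) • 1) *ᵥ v = ((hA.eigenvalues i : ℂ) - y) • v := by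
    rw [sub_mulVec, smul_mulVec, one_mulVec, hmv, sub_smul]
  have h2 : ((A - (x : ℂ) • 1) * (A - (y : ℂ) • 1)) *ᵥ v
      = (((hA.eigenvalues i : ℂ) - x) * ((hA.eigenvalues i : ℂ) - y)) • v := by
    rw [← mulVec_mulVec, h1, mulVec_smul, sub_mulVec, smul_mulVec, one_mulVec, hmv]
    module
  rw [h, zero_mulVec] at h2
  have h3 := (smul_eq_zero.mp h2.symm).resolve_right hvne
  rcases mul_eq_zero.mp h3 with h4 | h4 <;> [left; right] <;>
    exact_mod_cast sub_eq_zero.mp h4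

/-- Counting: if each value is `x` or `y`, and the sum forces exactly one `x`. -/
lemma aux_count {d : ℕ} (ν : Fin d → ℝ) (x y : ℝ) (hxy : x ≠ y)
    (hmem : ∀ i, ν i = x ∨ ν i = y) (hsum : ∑ i, ν i = x + ((d : ℝ) - 1) * y)
    (g : ℝ → ℝ) : ∑ i, g (ν i) = g x + ((d : ℝ) - 1) * g y := by
  classical
  set T : Finset (Fin d) := univ.filter (fun i => ν i = x) with hT
  have hcompl : ∀ i ∈ univ \ T, ν i = y := by
    intro i hi
    simp only [hT, mem_sdiff, mem_filter, mem_univ, true_and] at hi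
    exact (hmem i).resolve_left hi
  have hTval : ∀ i ∈ T, ν i = x := fun i hi => (mem_filter.mp hi).2
  have hcardc : ((univ \ T).card : ℝ) = (d : ℝ) - T.card := by
    rw [Finset.card_sdiff_of_subset (subset_univ T),
      Nat.cast_sub (by simpa using Finset.card_le_univ T)]
    simp
  have key : ∀ f : ℝ → ℝ, ∑ i, f (ν i) = (T.card : ℝ) * f x + ((d : ℝ) - T.card) * f y := by
    intro f
    rw [← Finset.sum_sdiff (subset_univ T),
      Finset.sum_congr rfl (fun i hi => by rw [hcompl i hi] : ∀ i ∈ univ \ T, f (ν i) = f y),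
      Finset.sum_congr rfl (fun i hi => by rw [hTval i hi] : ∀ i ∈ T, f (ν i) = f x)]
    simp only [Finset.sum_const, nsmul_eq_mul, hcardc]
    ring
  have hcard : (T.card : ℝ) = 1 := by
    have hs := key id
    simp only [id] at hs
    rw [hsum] at hs
    have h0 : ((T.card : ℝ) - 1) * (x - y) = 0 := by linarith
    rcases mul_eq_zero.mp h0 with h | h
    · linarith
    · exact absurd (by linarith : x = y) hxy
  rw [key g, hcard]; ring

/-- The key scalar inequality: entropy of an output of the depolarizing-type channel
is at least the entropy of the output on a pure basis state. -/
lemma aux_key {d : ℕ} (hd : 0 < d) {a c : ℝ} (ha0 : 0 < a) (hc0 : 0 < c)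
    (hdc : (d : ℝ) * c = 1 - a) (ν : Fin d → ℝ) (hge : ∀ i, c ≤ ν i)
    (hsum : ∑ i, ν i = 1) :
    negMulLog (a + c) + ((d : ℝ) - 1) * negMulLog c ≤ ∑ i, negMulLog (ν i) := by
  have hd1 : (1 : ℝ) ≤ (d : ℝ) := by exact_mod_cast hd
  have hub : ∀ i, ν i ≤ a + c := by
    intro i
    have h1 : ∑ j ∈ univ.erase i, ν j + ν i = 1 := by
      rw [Finset.sum_erase_add _ _ (mem_univ i)]; exact hsum
    have h2 : ((d : ℝ) - 1) * c ≤ ∑ j ∈ univ.erase i, ν j := by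
      calc ((d : ℝ) - 1) * c = ((univ.erase i).card : ℝ) * c := by
            rw [Finset.card_erase_of_mem (mem_univ i)]
            rw [Nat.cast_sub (by simp [Finset.card_univ]; omega)]
            simp
        _ ≤ ∑ j ∈ univ.erase i, ν j := by
            rw [← nsmul_eq_mul]
            exact Finset.card_nsmul_le_sum _ _ _ (fun j _ => hge j)
    nlinarith
  set lam : Fin d → ℝ := fun i => (ν i - c) / a with hlam
  have hlam0 : ∀ i, 0 ≤ lam i := fun i => div_nonneg (by linarith [hge i]) ha0.le
  have hlamsum : ∑ i, lam i = 1 := by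
    simp only [hlam, div_eq_mul_inv, ← Finset.sum_mul]
    rw [Finset.sum_sub_distrib, hsum]
    simp only [Finset.sum_const, Finset.card_univ, Fintype.card_fin, nsmul_eq_mul]
    rw [hdc]
    field_simp
    ring
  have hconc : ∀ i, (1 - lam i) * negMulLog c + lam i * negMulLog (a + c)
      ≤ negMulLog (ν i) := by
    intro i
    have hlam1 : lam i ≤ 1 := by
      rw [hlam]
      rw [div_le_one ha0]
      linarith [hub i]
    have h := Real.concaveOn_negMulLog.2 (Set.mem_Ici.2 hc0.le)
      (Set.mem_Ici.2 (by linarith : (0:ℝ) ≤ a + c))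
      (by linarith : (0:ℝ) ≤ 1 - lam i) (hlam0 i) (by ring)
    have harg : (1 - lam i) • c + lam i • (a + c) = ν i := by
      simp only [smul_eq_mul, hlam]
      field_simp
      ring
    rw [harg] at h
    simpa using h
  calc negMulLog (a + c) + ((d : ℝ) - 1) * negMulLog c
      = ∑ i, ((1 - lam i) * negMulLog c + lam i * negMulLog (a + c)) := by
        rw [Finset.sum_add_distrib]
        simp only [← Finset.sum_mul, Finset.sum_sub_distrib, hlamsum]
        simp [Finset.card_univ]
        ring
    _ ≤ ∑ i, negMulLog (ν i) := Finset.sum_le_sum (fun i _ => hconc i)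

/-- Entropy is at most `log d`. -/
lemma aux_le_log {d : ℕ} (hd : 0 < d) (ν : Fin d → ℝ) (hge : ∀ i, 0 ≤ ν i)
    (hsum : ∑ i, ν i = 1) : ∑ i, negMulLog (ν i) ≤ Real.log d := by
  have hdpos : (0:ℝ) < d := by exact_mod_cast hd
  have hterm : ∀ i, negMulLog (ν i) ≤ ν i * Real.log d + ((1:ℝ)/d - ν i) := by
    intro i
    rcases eq_or_lt_of_le (hge i) with h | h
    · rw [← h]
      simp only [negMulLog_zero]
      have h1 : (0:ℝ) ≤ 1/d := by positivity
      nlinarith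
    · have hl := Real.log_le_sub_one_of_pos (show (0:ℝ) < 1/(ν i * d) by positivity)
      have hmul := mul_le_mul_of_nonneg_left hl (le_of_lt h)
      have e1 : ν i * (1 / (ν i * d)) = 1 / d := by field_simp
      have e2 : Real.log (1 / (ν i * d)) = -Real.log (ν i) - Real.log d := by
        rw [one_div, Real.log_inv, Real.log_mul (ne_of_gt h) (ne_of_gt hdpos)]
        ring
      rw [e2] at hmul
      simp only [negMulLog]
      nlinarith [e1]
  calc ∑ i, negMulLog (ν i) ≤ ∑ i, (ν i * Real.log d + ((1:ℝ)/d - ν i)) :=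
        Finset.sum_le_sum (fun i _ => hterm i)
    _ = Real.log d := by
        rw [Finset.sum_add_distrib, ← Finset.sum_mul, hsum, Finset.sum_sub_distrib, hsum]
        simp [Finset.card_univ]
        field_simp
        ring

/-- Nonnegative real scalar multiples of PSD matrices are PSD. -/
lemma aux_smul_psd {d : ℕ} {r : ℝ} (hr : 0 ≤ r) {A : Matrix (Fin d) (Fin d) ℂ}
    (hA : A.PosSemidef) : ((r : ℂ) • A).PosSemidef := by
  refine Matrix.PosSemidef.of_dotProduct_mulVec_nonneg ?_ (fun x => ?_)
  · unfold Matrix.IsHermitian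
    rw [conjTranspose_smul, hA.1.eq]
    congr 1
    simp [Complex.star_def]
  · rw [smul_mulVec, dotProduct_smul, smul_eq_mul]
    exact mul_nonneg (by exact_mod_cast hr) (hA.dotProduct_mulVec_nonneg x)

/-- Real scalar multiples of Hermitian matrices are Hermitian. -/
lemma aux_smul_herm {d : ℕ} (r : ℝ) {A : Matrix (Fin d) (Fin d) ℂ}
    (hA : A.IsHermitian) : ((r : ℂ) • A).IsHermitian := by
  unfold Matrix.IsHermitian
  rw [conjTranspose_smul, hA.eq]
  congr 1
  simp [Complex.star_def]

/-- Finite sums of PSD matrices are PSD. -/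
lemma aux_sum_psd {d : ℕ} {ι : Type*} [Fintype ι] (f : ι → Matrix (Fin d) (Fin d) ℂ)
    (h : ∀ k, (f k).PosSemidef) : (∑ k, f k).PosSemidef :=
  Finset.sum_induction f _ (fun _ _ hA hB => hA.add hB) Matrix.PosSemidef.zero
    (fun k _ => h k)

/-- Conjugation by a diagonal unitary fixes diagonal basis projections. -/
lemma aux_diag_conj {d : ℕ} (V : Matrix (Fin d) (Fin d) ℂ) (hU : V * Vᴴ = 1)
    (hdiag : ∀ i j : Fin d, i ≠ j → V i j = 0) (m : Fin d) :
    V * Matrix.single m m 1 * Vᴴ = Matrix.single m m 1 := by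
  have hVd : V = Matrix.diagonal (fun i => V i i) := by
    ext i j
    by_cases h : i = j
    · subst h; simp
    · simp [Matrix.diagonal_apply_ne _ h, hdiag i j h]
  have hu : V m m * star (V m m) = 1 := by
    have h1 : (V * Vᴴ) m m = (1 : Matrix (Fin d) (Fin d) ℂ) m m := by rw [hU]
    rw [hVd] at h1
    simpa [Matrix.diagonal_conjTranspose, Matrix.diagonal_mul_diagonal,
      Matrix.diagonal_apply_eq, Matrix.one_apply_eq] using h1
  rw [hVd, Matrix.diagonal_conjTranspose]
  ext i j
  rw [Matrix.mul_diagonal, Matrix.diagonal_mul]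
  simp only [Matrix.single, Matrix.of_apply, Pi.star_apply]
  by_cases hi : m = i
  · by_cases hj : m = j
    · subst hi; subst hj
      simp only [and_self, if_true]
      rw [mul_comm (V m m) 1, mul_assoc, one_mul, hu]
    · simp [hj]
  · simp [hi]

/-- Diagonal basis projections are density matrices. -/
lemma aux_std_density {d : ℕ} (m : Fin d) : (Matrix.single m m (1:ℂ)).PosSemidef ∧
    (Matrix.single m m (1:ℂ)).trace = 1 := by
  refine ⟨Matrix.PosSemidef.of_dotProduct_mulVec_nonneg ?_ (fun x => ?_), ?_⟩
  · unfold Matrix.IsHermitian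
    ext i j
    simp only [Matrix.conjTranspose_apply, Matrix.single, Matrix.of_apply]
    by_cases hi : m = i <;> by_cases hj : m = j <;> simp [hi, hj]
  · have hmv : (Matrix.single m m (1:ℂ)) *ᵥ x = fun i => if m = i then x m else 0 := by
      ext i
      simp only [Matrix.mulVec, dotProduct, Matrix.single, Matrix.of_apply]
      by_cases hi : m = i
      · subst hi
        rw [Finset.sum_eq_single m]
        · simp
        · intro b _ hb
          have hn : ¬(m = b) := fun h => hb h.symm
          simp [hn]
        · simp
      · rw [Finset.sum_eq_zero]
        · simp [hi]
        · intro b _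
          simp +contextual [hi]
    rw [hmv]
    have h2 : star x ⬝ᵥ (fun i => if m = i then x m else 0) = star (x m) * x m := by
      simp only [dotProduct, Pi.star_apply, mul_ite, mul_zero]
      rw [Finset.sum_eq_single m]
      · simp
      · intro b _ hb
        have hn : ¬(m = b) := fun h => hb h.symm
        simp [hn]
      · simp
    rw [h2]
    exact star_mul_self_nonneg (x m)
  · simp [Matrix.trace, Matrix.diag, Matrix.single]

/-- The diagonal basis projections sum to the identity. -/
lemma aux_sum_std {d : ℕ} : ∑ m : Fin d, Matrix.single m m (1:ℂ) = 1 := by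
  ext i j
  simp only [Matrix.sum_apply, Matrix.single, Matrix.of_apply]
  by_cases h : i = j
  · subst h
    rw [Finset.sum_eq_single i]
    · simp
    · intro b _ hb
      simp [hb]
    · simp
  · rw [Finset.sum_eq_zero]
    · simp [Matrix.one_apply_ne h]
    · intro m _
      by_cases hm : m = i
      · subst hm; simp [h]
      · simp [hm]

/-- Trace is invariant under unitary conjugation. -/
lemma aux_trace_conj {d : ℕ} (V ρ : Matrix (Fin d) (Fin d) ℂ) (hV : Vᴴ * V = 1) :
    (V * ρ * Vᴴ).trace = ρ.trace := by
  rw [Matrix.trace_mul_cycle, hV, Matrix.one_mul]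

/-- Expressing `vNEntropy` via `negMulLog` of the eigenvalues. -/
lemma aux_vN {d : ℕ} {M : Matrix (Fin d) (Fin d) ℂ} (hM : M.IsHermitian) :
    vNEntropy M = ∑ i, Real.negMulLog (hM.eigenvalues i) := by
  rw [vNEntropy, dif_pos hM]
  simp [Real.negMulLog, neg_mul]

/-- Entropy of `a • |m⟩⟨m| + c • 1`. -/
lemma aux_entropy_value {d : ℕ} {a c : ℝ} (ha0 : 0 < a) (m : Fin d) :
    vNEntropy ((a : ℂ) • Matrix.single m m 1 + ((c : ℝ) : ℂ) • 1)
      = negMulLog (a + c) + ((d : ℝ) - 1) * negMulLog c := by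
  set E : Matrix (Fin d) (Fin d) ℂ := Matrix.single m m 1 with hE
  set M : Matrix (Fin d) (Fin d) ℂ := (a : ℂ) • E + ((c : ℝ) : ℂ) • 1 with hMdef
  have hEherm : E.IsHermitian := (aux_std_density m).1.1
  have hM : M.IsHermitian := (aux_smul_herm a hEherm).add (aux_smul_herm c isHermitian_one)
  have hEE : E * E = E := by
    rw [hE, Matrix.single_mul_single_same, mul_one]
  have hann : (M - (((a + c : ℝ) : ℂ)) • 1) * (M - ((c : ℝ) : ℂ) • 1) = 0 := by
    have e1 : M - (((a + c : ℝ) : ℂ)) • 1 = (a : ℂ) • (E - 1) := by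
      rw [hMdef]; push_cast; module
    have e2 : M - ((c : ℝ) : ℂ) • 1 = (a : ℂ) • E := by
      rw [hMdef]; module
    rw [e1, e2, Matrix.smul_mul, Matrix.mul_smul, sub_mul, one_mul, hEE, sub_self,
      smul_zero, smul_zero]
  have hmem : ∀ i, hM.eigenvalues i = a + c ∨ hM.eigenvalues i = c :=
    fun i => aux_eig_mem hM hann i
  have htr : M.trace = ((a + c * d : ℝ) : ℂ) := by
    rw [hMdef, Matrix.trace_add, Matrix.trace_smul, Matrix.trace_smul, Matrix.trace_one,
      (aux_std_density m).2]
    simp only [smul_eq_mul, Fintype.card_fin]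
    push_cast
    ring
  have hsum : ∑ i, hM.eigenvalues i = (a + c) + ((d : ℝ) - 1) * c := by
    have h1 : ((∑ i, hM.eigenvalues i : ℝ) : ℂ) = ((a + c * d : ℝ) : ℂ) := by
      push_cast
      rw [← aux_trace_eq_sum_eig hM, htr]
      push_cast
      ring
    have h2 : (∑ i, hM.eigenvalues i : ℝ) = a + c * d := by exact_mod_cast h1
    rw [h2]; ring
  rw [aux_vN hM, aux_count _ (a + c) c (by linarith) hmem hsum]

/-- Entropy of a scalar matrix `s • 1`. -/
lemma aux_scalar_entropy {d : ℕ} (s : ℝ) :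
    vNEntropy (((s : ℝ) : ℂ) • (1 : Matrix (Fin d) (Fin d) ℂ)) = d * negMulLog s := by
  set M : Matrix (Fin d) (Fin d) ℂ := ((s : ℝ) : ℂ) • 1 with hMdef
  have hM : M.IsHermitian := aux_smul_herm s isHermitian_one
  have hann : (M - ((s : ℝ) : ℂ) • 1) * (M - ((s : ℝ) : ℂ) • 1) = 0 := by
    rw [hMdef, sub_self, zero_mul]
  have hmem : ∀ i, hM.eigenvalues i = s := fun i => (aux_eig_mem hM hann i).elim id id
  rw [aux_vN hM]
  rw [Finset.sum_congr rfl (fun i _ => by rw [hmem i])]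
  simp [Finset.card_univ]

/-- Entropy bounds for Hermitian `M` with `M - c • 1` PSD and unit trace. -/
lemma aux_entropy_bounds {d : ℕ} (hd : 0 < d) {a c : ℝ} (ha0 : 0 < a) (hc0 : 0 < c)
    (hdc : (d : ℝ) * c = 1 - a) {M : Matrix (Fin d) (Fin d) ℂ} (hM : M.IsHermitian)
    (hpsd : (M - ((c : ℝ) : ℂ) • 1).PosSemidef) (htr : M.trace = 1) :
    negMulLog (a + c) + ((d : ℝ) - 1) * negMulLog c ≤ vNEntropy M ∧
      vNEntropy M ≤ Real.log d := by
  have hge : ∀ i, c ≤ hM.eigenvalues i := fun i => aux_eig_ge hM hpsd i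
  have hsum : ∑ i, hM.eigenvalues i = 1 := by
    have h1 : ((∑ i, hM.eigenvalues i : ℝ) : ℂ) = 1 := by
      push_cast
      rw [← aux_trace_eq_sum_eig hM, htr]
    exact_mod_cast h1
  rw [aux_vN hM]
  exact ⟨aux_key hd ha0 hc0 hdc _ hge hsum,
    aux_le_log hd _ (fun i => le_trans hc0.le (hge i)) hsum⟩

end Aux

open GenDep in
/-- for a generalized depolarizing channel with simultaneously diagonal
unitaries, the standard basis projections are mapped as for the depolarizing channel,
and the Holevo capacity equals `log d - S_min(Φ) = log d - S_min(Γ_a)`. -/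
theorem stmt_14 {d : ℕ} (hd : 0 < d) {ι : Type*} [Fintype ι]
    (a : ι → ℝ) (V : ι → Matrix (Fin d) (Fin d) ℂ) (atot : ℝ)
    (ha : ∀ k, 0 < a k) (hatot : atot = ∑ k, a k)
    (hatot0 : 0 < atot) (hatot1 : atot < 1)
    (hV : ∀ k, IsUnitary (V k))
    (hdiag : ∀ k, ∀ i j : Fin d, i ≠ j → V k i j = 0)
    (Φ : Matrix (Fin d) (Fin d) ℂ → Matrix (Fin d) (Fin d) ℂ)
    (hΦ : ∀ ρ, Φ ρ =
      (∑ k, (a k : ℂ) • (V k * ρ * (V k)ᴴ)) +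
        ((((1 : ℝ) - atot : ℝ) : ℂ) / d * ρ.trace) • 1) :
    (∀ m : Fin d, Φ (Matrix.single m m 1) =
      (atot : ℂ) • Matrix.single m m 1 +
        ((((1 : ℝ) - atot : ℝ) : ℂ) / d) • 1) ∧
    holevoCapacity Φ = Real.log d - minOutputEntropy Φ ∧
    minOutputEntropy Φ = minOutputEntropy (depolarizing d atot) := by
  classical
  have hdC : (d : ℂ) ≠ 0 := Nat.cast_ne_zero.mpr hd.ne'
  have hdR : (0 : ℝ) < d := by exact_mod_cast hd
  set c : ℝ := (1 - atot) / d with hcdef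
  have hc0 : 0 < c := div_pos (by linarith) hdR
  have hdc : (d : ℝ) * c = 1 - atot := by
    rw [hcdef]; field_simp
  have hccast : ((((1 : ℝ) - atot : ℝ) : ℂ) / d) = ((c : ℝ) : ℂ) := by
    rw [hcdef]; push_cast; ring
  set Emin : ℝ := Real.negMulLog (atot + c) + ((d : ℝ) - 1) * Real.negMulLog c with hEmindef
  have hsumcast : (∑ k, (a k : ℂ)) = (atot : ℂ) := by
    rw [hatot]; push_cast; ring
  -- Part 1
  have hpart1 : ∀ m : Fin d, Φ (Matrix.single m m 1) =
      (atot : ℂ) • Matrix.single m m 1 + ((((1 : ℝ) - atot : ℝ) : ℂ) / d) • 1 := by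
    intro m
    rw [hΦ, (aux_std_density m).2, mul_one]
    congr 1
    rw [Finset.sum_congr rfl (fun k _ => by
      rw [aux_diag_conj (V k) (hV k).2 (hdiag k) m] :
        ∀ k ∈ Finset.univ, (a k : ℂ) • (V k * Matrix.single m m 1 * (V k)ᴴ)
          = (a k : ℂ) • Matrix.single m m 1)]
    rw [← Finset.sum_smul, hsumcast]
  -- output entropy bounds for Φ
  have hout : ∀ ρ : Matrix (Fin d) (Fin d) ℂ, IsDensityMatrix ρ →
      Emin ≤ vNEntropy (Φ ρ) ∧ vNEntropy (Φ ρ) ≤ Real.log d := by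
    intro ρ hρ
    have hsub : Φ ρ - ((c : ℝ) : ℂ) • 1 = ∑ k, (a k : ℂ) • (V k * ρ * (V k)ᴴ) := by
      rw [hΦ, hρ.2, mul_one, hccast, add_sub_cancel_right]
    have hpsd : (Φ ρ - ((c : ℝ) : ℂ) • 1).PosSemidef := by
      rw [hsub]
      exact aux_sum_psd _ (fun k => aux_smul_psd (ha k).le
        (hρ.1.mul_mul_conjTranspose_same (V k)))
    have hherm : (Φ ρ).IsHermitian := by
      have h2 := hpsd.1.add (aux_smul_herm c Matrix.isHermitian_one)
      rwa [sub_add_cancel] at h2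
    have htr : (Φ ρ).trace = 1 := by
      rw [hΦ, Matrix.trace_add, Matrix.trace_sum, Matrix.trace_smul, Matrix.trace_one]
      rw [Finset.sum_congr rfl (fun k _ => by
        rw [Matrix.trace_smul, aux_trace_conj (V k) ρ (hV k).1, hρ.2] :
          ∀ k ∈ Finset.univ, ((a k : ℂ) • (V k * ρ * (V k)ᴴ)).trace = (a k : ℂ) • 1)]
      simp only [smul_eq_mul, mul_one]
      rw [hsumcast, hρ.2, Fintype.card_fin]
      field_simp
      push_cast
      ring
    exact aux_entropy_bounds hd hatot0 hc0 hdc hherm hpsd htr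
  -- output entropy lower bound for the depolarizing channel
  have hout' : ∀ σ : Matrix (Fin d) (Fin d) ℂ, IsDensityMatrix σ →
      Emin ≤ vNEntropy (depolarizing d atot σ) := by
    intro σ hσ
    have hform : depolarizing d atot σ = (atot : ℂ) • σ + ((c : ℝ) : ℂ) • 1 := by
      rw [depolarizing, hσ.2, mul_one, hccast]
    have hpsd : (depolarizing d atot σ - ((c : ℝ) : ℂ) • 1).PosSemidef := by
      rw [hform, add_sub_cancel_right]
      exact aux_smul_psd hatot0.le hσ.1
    have hherm : (depolarizing d atot σ).IsHermitian := by
      have h2 := hpsd.1.add (aux_smul_herm c Matrix.isHermitian_one)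
      rwa [sub_add_cancel] at h2
    have htr : (depolarizing d atot σ).trace = 1 := by
      rw [hform, Matrix.trace_add, Matrix.trace_smul, Matrix.trace_smul, Matrix.trace_one,
        hσ.2, Fintype.card_fin]
      have h3 : ((c : ℝ) : ℂ) * (d : ℂ) = (((1 : ℝ) - atot : ℝ) : ℂ) := by
        have h4 : c * (d : ℝ) = 1 - atot := by linarith [hdc]
        exact_mod_cast congrArg (fun t : ℝ => (t : ℂ)) h4
      simp only [smul_eq_mul, mul_one]
      rw [h3]
      push_cast
      ring
    exact (aux_entropy_bounds hd hatot0 hc0 hdc hherm hpsd htr).1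
  -- the value at basis states
  have hvalPhi : ∀ m : Fin d, vNEntropy (Φ (Matrix.single m m 1)) = Emin := by
    intro m
    rw [hpart1 m, hccast, aux_entropy_value hatot0 m]
  set m0 : Fin d := ⟨0, hd⟩ with hm0
  have hdens0 : IsDensityMatrix (Matrix.single m0 m0 (1 : ℂ)) := aux_std_density m0
  have hvalGamma : vNEntropy (depolarizing d atot (Matrix.single m0 m0 1)) = Emin := by
    rw [depolarizing, (aux_std_density m0).2, mul_one, hccast, aux_entropy_value hatot0 m0]
  -- the minimal output entropies
  have hminPhi : minOutputEntropy Φ = Emin := by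
    unfold minOutputEntropy
    apply le_antisymm
    · exact csInf_le ⟨Emin, by rintro x ⟨ρ, hρ, rfl⟩; exact (hout ρ hρ).1⟩
        ⟨_, hdens0, (hvalPhi m0).symm⟩
    · exact le_csInf ⟨Emin, _, hdens0, (hvalPhi m0).symm⟩
        (by rintro x ⟨ρ, hρ, rfl⟩; exact (hout ρ hρ).1)
  have hminGamma : minOutputEntropy (depolarizing d atot) = Emin := by
    unfold minOutputEntropy
    apply le_antisymm
    · exact csInf_le ⟨Emin, by rintro x ⟨ρ, hρ, rfl⟩; exact hout' ρ hρ⟩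
        ⟨_, hdens0, hvalGamma.symm⟩
    · exact le_csInf ⟨Emin, _, hdens0, hvalGamma.symm⟩
        (by rintro x ⟨ρ, hρ, rfl⟩; exact hout' ρ hρ)
  -- Φ on the maximally mixed state
  have hPhiUnit : Φ (∑ j : Fin d, ((((1 : ℝ)/d : ℝ)) : ℂ) • Matrix.single j j 1)
      = ((((1 : ℝ)/d : ℝ)) : ℂ) • 1 := by
    rw [← Finset.smul_sum, aux_sum_std, hΦ]
    have h1 : ∀ k ∈ Finset.univ, (a k : ℂ) •
        (V k * (((((1 : ℝ)/d : ℝ)) : ℂ) • (1 : Matrix (Fin d) (Fin d) ℂ)) * (V k)ᴴ)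
        = (a k : ℂ) • (((((1 : ℝ)/d : ℝ)) : ℂ) • (1 : Matrix (Fin d) (Fin d) ℂ)) := by
      intro k _
      rw [Matrix.mul_smul, Matrix.mul_one, Matrix.smul_mul, (hV k).2]
    rw [Finset.sum_congr rfl h1, ← Finset.sum_smul, hsumcast, Matrix.trace_smul,
      Matrix.trace_one, Fintype.card_fin]
    rw [smul_smul, ← add_smul]
    congr 1
    simp only [smul_eq_mul]
    push_cast
    field_simp
    ring
  have hlogd : (d : ℝ) * Real.negMulLog ((1 : ℝ)/d) = Real.log d := by
    rw [Real.negMulLog, one_div, Real.log_inv]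
    field_simp
  -- Holevo capacity
  have hub : ∀ x ∈ {x | ∃ (m : ℕ) (w : Fin m → ℝ) (ρ : Fin m → Matrix (Fin d) (Fin d) ℂ),
      (∀ j, 0 < w j) ∧ (∑ j, w j = 1) ∧ (∀ j, IsDensityMatrix (ρ j)) ∧
      x = vNEntropy (Φ (∑ j, (w j : ℂ) • ρ j)) - ∑ j, w j * vNEntropy (Φ (ρ j))},
      x ≤ Real.log d - Emin := by
    rintro x ⟨n, w, ρ, hw, hwsum, hρ, rfl⟩
    have hbar : IsDensityMatrix (∑ j, (w j : ℂ) • ρ j) := by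
      constructor
      · exact aux_sum_psd _ (fun j => aux_smul_psd (hw j).le (hρ j).1)
      · rw [Matrix.trace_sum]
        rw [Finset.sum_congr rfl (fun j _ => by
          rw [Matrix.trace_smul, (hρ j).2] :
            ∀ j ∈ Finset.univ, ((w j : ℂ) • ρ j).trace = (w j : ℂ) • 1)]
        simp only [smul_eq_mul, mul_one]
        rw [← Complex.ofReal_sum, hwsum, Complex.ofReal_one]
    have h1 := (hout _ hbar).2
    have h3 : ∑ j, w j * Emin ≤ ∑ j, w j * vNEntropy (Φ (ρ j)) :=
      Finset.sum_le_sum (fun j _ => mul_le_mul_of_nonneg_left (hout _ (hρ j)).1 (hw j).le)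
    have h4 : ∑ j, w j * Emin = Emin := by rw [← Finset.sum_mul, hwsum, one_mul]
    linarith
  have hmemH : Real.log d - Emin ∈ {x | ∃ (m : ℕ) (w : Fin m → ℝ)
      (ρ : Fin m → Matrix (Fin d) (Fin d) ℂ),
      (∀ j, 0 < w j) ∧ (∑ j, w j = 1) ∧ (∀ j, IsDensityMatrix (ρ j)) ∧
      x = vNEntropy (Φ (∑ j, (w j : ℂ) • ρ j)) - ∑ j, w j * vNEntropy (Φ (ρ j))} := by
    refine ⟨d, fun _ => (1 : ℝ)/d, fun j => Matrix.single j j 1, ?_, ?_, ?_, ?_⟩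
    · intro j; positivity
    · rw [Finset.sum_const, Finset.card_univ, Fintype.card_fin, nsmul_eq_mul]
      field_simp
    · exact fun j => aux_std_density j
    · rw [hPhiUnit, aux_scalar_entropy, hlogd]
      rw [Finset.sum_congr rfl (fun j _ => by rw [hvalPhi j] :
        ∀ j ∈ Finset.univ, (1 : ℝ)/d * vNEntropy (Φ (Matrix.single j j 1))
          = (1 : ℝ)/d * Emin)]
      rw [Finset.sum_const, Finset.card_univ, Fintype.card_fin, nsmul_eq_mul]
      have h5 : (d : ℝ) * ((1 : ℝ)/d * Emin) = Emin := by field_simp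
      rw [h5]
  have hholevo : holevoCapacity Φ = Real.log d - Emin := by
    unfold holevoCapacity
    apply le_antisymm
    · exact csSup_le ⟨_, hmemH⟩ hub
    · exact le_csSup ⟨Real.log d - Emin, hub⟩ hmemH
  refine ⟨hpart1, ?_, ?_⟩
  · rw [hholevo, hminPhi]
  · rw [hminPhi, hminGamma]
end
end

section
/- Let Ω be a channel on d×d complex matrices. If {(π_j, ρ_j)} and {(π'_i, ρ'_i)} are two finite ensembles of density matrices both achieving the Holevo capacity, i.e., S(Ω(ρ_av)) − Σ_j π_j S(Ω(ρ_j)) = C_Holv(Ω) = S(Ω(ρ'_av)) − Σ_i π'_i S(Ω(ρ'_i)) where ρ_av = Σ_j π_j ρ_j and ρ'_av = Σ_i π'_i ρ'_i, then Ω(ρ_av) = Ω(ρ'_av); that is, the optimal average output of a channel is unique. -/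
open scoped BigOperators Matrix Kronecker ComplexOrder

noncomputable section

namespace StmtAux

open Matrix GenDep  -- 

variable {n : Type*} [Fintype n] [DecidableEq n]

lemma klein_scalar {a b : ℝ} (ha : 0 ≤ a) (hb : 0 ≤ b) (h0 : b = 0 → a = 0) :
    a - b ≤ a * Real.log a - a * Real.log b ∧
      (a * Real.log a - a * Real.log b ≤ a - b → a = b) := by
  rcases eq_or_lt_of_le hb with hb0 | hb0
  · have ha0 : a = 0 := h0 hb0.symm
    subst ha0
    rw [← hb0]
    simp
  rcases eq_or_lt_of_le ha with ha0 | ha0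
  · constructor
    · simp [← ha0]
      linarith
    · intro h
      simp [← ha0] at h
      linarith
  · have hba : (0:ℝ) < b / a := div_pos hb0 ha0
    have hlog := Real.log_le_sub_one_of_pos hba
    rw [Real.log_div hb0.ne' ha0.ne'] at hlog
    have key : a * (Real.log b - Real.log a) ≤ b - a := by
      have := mul_le_mul_of_nonneg_left hlog ha0.le
      have hab : a * (b / a - 1) = b - a := by field_simp
      linarith
    constructor
    · nlinarith
    · intro h
      by_contra hne
      have hne' : b / a ≠ 1 := by
        intro hh
        apply hne
        field_simp at hh
        linarith
      have hstrict := Real.log_lt_sub_one_of_pos hba hne'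
      rw [Real.log_div hb0.ne' ha0.ne'] at hstrict
      have := mul_lt_mul_of_pos_left hstrict ha0
      have hab : a * (b / a - 1) = b - a := by field_simp
      nlinarith


lemma trace_mul_diag (M : Matrix n n ℂ) (f : n → ℂ) :
    (M * diagonal f).trace = ∑ j, f j * M j j := by
  simp [Matrix.trace, Matrix.diag, Matrix.mul_diagonal, mul_comm]

lemma trace_mul_matLog {σ : Matrix n n ℂ} (h : σ.IsHermitian) (ρ : Matrix n n ℂ) :
    (ρ * matLog σ).trace =
      ∑ j, (Real.log (h.eigenvalues j) : ℂ) *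
        ((star (h.eigenvectorUnitary : Matrix n n ℂ) * ρ *
          (h.eigenvectorUnitary : Matrix n n ℂ)) j j) := by
  set U : Matrix n n ℂ := (h.eigenvectorUnitary : Matrix n n ℂ) with hU
  have h1 : ρ * matLog σ =
      (ρ * U * diagonal (fun i => (Real.log (h.eigenvalues i) : ℂ))) * star U := by
    rw [matLog, dif_pos h]
    simp only [mul_assoc, hU]
  rw [h1, Matrix.trace_mul_comm]
  have h2 : star U * (ρ * U * diagonal (fun i => (Real.log (h.eigenvalues i) : ℂ)))
      = (star U * ρ * U) * diagonal (fun i => (Real.log (h.eigenvalues i) : ℂ)) := by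
    simp only [mul_assoc]
  rw [h2, trace_mul_diag]

lemma star_mul_self_mul (h : (0:ℕ) = 0) : True := trivial

-- star U * U = 1 and U * star U = 1
lemma eigU_star_mul {A : Matrix n n ℂ} (h : A.IsHermitian) :
    star (h.eigenvectorUnitary : Matrix n n ℂ) * (h.eigenvectorUnitary : Matrix n n ℂ) = 1 :=
  Matrix.mem_unitaryGroup_iff'.mp h.eigenvectorUnitary.2

lemma eigU_mul_star {A : Matrix n n ℂ} (h : A.IsHermitian) :
    (h.eigenvectorUnitary : Matrix n n ℂ) * star (h.eigenvectorUnitary : Matrix n n ℂ) = 1 :=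
  Matrix.mem_unitaryGroup_iff.mp h.eigenvectorUnitary.2

lemma trace_eq_sum_eigenvalues {A : Matrix n n ℂ} (h : A.IsHermitian) :
    A.trace = ((∑ i, h.eigenvalues i : ℝ) : ℂ) := by
  conv_lhs => rw [show A = (h.eigenvectorUnitary : Matrix n n ℂ) * diagonal (fun i => (h.eigenvalues i : ℂ)) *
    star (h.eigenvectorUnitary : Matrix n n ℂ) from h.spectral_theorem]
  rw [Matrix.trace_mul_cycle, eigU_star_mul h, one_mul, Matrix.trace_diagonal]
  push_cast
  simp [Function.comp]

lemma trace_mul_matLog_self {ρ : Matrix n n ℂ} (h : ρ.IsHermitian) :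
    (ρ * matLog ρ).trace = ((∑ i, h.eigenvalues i * Real.log (h.eigenvalues i) : ℝ) : ℂ) := by
  have hd : star (h.eigenvectorUnitary : Matrix n n ℂ) * ρ * (h.eigenvectorUnitary : Matrix n n ℂ) =
      diagonal (fun i => (h.eigenvalues i : ℂ)) := by
    rw [show star (h.eigenvectorUnitary : Matrix n n ℂ) * ρ * (h.eigenvectorUnitary : Matrix n n ℂ) =
      star (h.eigenvectorUnitary : Matrix n n ℂ) * ((h.eigenvectorUnitary : Matrix n n ℂ) *
        diagonal (fun i => (h.eigenvalues i : ℂ)) * star (h.eigenvectorUnitary : Matrix n n ℂ)) *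
        (h.eigenvectorUnitary : Matrix n n ℂ) from
      congrArg (fun M => star (h.eigenvectorUnitary : Matrix n n ℂ) * M *
        (h.eigenvectorUnitary : Matrix n n ℂ)) h.spectral_theorem]
    simp only [mul_assoc]
    rw [eigU_star_mul h, mul_one, ← mul_assoc, eigU_star_mul h, one_mul]
  rw [trace_mul_matLog h ρ, hd]
  push_cast
  refine Finset.sum_congr rfl fun j _ => ?_
  simp [Matrix.diagonal_apply_eq, mul_comm]


lemma klein_matrix {ρ σ : Matrix n n ℂ} (hρ : ρ.PosSemidef) (hρt : ρ.trace = 1)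
    (hσ : σ.PosSemidef) (hσt : σ.trace = 1)
    (hker : ∀ x, σ *ᵥ x = 0 → ρ *ᵥ x = 0) :
    ((ρ * matLog σ).trace).re ≤ ((ρ * matLog ρ).trace).re ∧
      (((ρ * matLog ρ).trace).re ≤ ((ρ * matLog σ).trace).re → ρ = σ) := by
  classical
  set V : Matrix n n ℂ := (hρ.1.eigenvectorUnitary : Matrix n n ℂ) with hVdef
  set U : Matrix n n ℂ := (hσ.1.eigenvectorUnitary : Matrix n n ℂ) with hUdef
  set lam := hρ.1.eigenvalues with hlamdef
  set mu := hσ.1.eigenvalues with hmudef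
  set W : Matrix n n ℂ := star V * U with hWdef
  set c : n → n → ℝ := fun i j => Complex.normSq (W i j) with hcdef
  have hVV : star V * V = 1 := eigU_star_mul hρ.1
  have hVV' : V * star V = 1 := eigU_mul_star hρ.1
  have hUU : star U * U = 1 := eigU_star_mul hσ.1
  have hUU' : U * star U = 1 := eigU_mul_star hσ.1
  have hWstar : star W = star U * V := by rw [hWdef, StarMul.star_mul, star_star]
  have hWW : W * star W = 1 := by
    rw [hWdef, hWstar, mul_assoc, ← mul_assoc U, hUU', one_mul, hVV]
  have hWW' : star W * W = 1 := by
    rw [hWstar, hWdef, mul_assoc, ← mul_assoc V, hVV', one_mul, hUU]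
  have hc0 : ∀ i j, 0 ≤ c i j := fun i j => Complex.normSq_nonneg _
  have hterm : ∀ i j, W i j * star (W i j) = ((c i j : ℝ) : ℂ) := by
    intro i j
    rw [hcdef]
    exact Complex.mul_conj _
  have hrow : ∀ i, ∑ j, c i j = 1 := by
    intro i
    have h1 : (W * star W) i i = 1 := by rw [hWW, Matrix.one_apply_eq]
    rw [Matrix.mul_apply] at h1
    have h2 : ∀ j, W i j * (star W) j i = ((c i j : ℝ) : ℂ) := by
      intro j
      rw [Matrix.star_apply]
      exact hterm i j
    rw [Finset.sum_congr rfl fun j _ => h2 j] at h1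
    exact_mod_cast h1
  have hcol : ∀ j, ∑ i, c i j = 1 := by
    intro j
    have h1 : (star W * W) j j = 1 := by rw [hWW', Matrix.one_apply_eq]
    rw [Matrix.mul_apply] at h1
    have h2 : ∀ i, (star W) j i * W i j = ((c i j : ℝ) : ℂ) := by
      intro i
      rw [Matrix.star_apply, mul_comm]
      exact hterm i j
    rw [Finset.sum_congr rfl fun i _ => h2 i] at h1
    exact_mod_cast h1
  have hlam0 : ∀ i, 0 ≤ lam i := hρ.eigenvalues_nonneg
  have hmu0 : ∀ j, 0 ≤ mu j := hσ.eigenvalues_nonneg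
  have hlam1 : ∑ i, lam i = 1 := by
    have h1 := trace_eq_sum_eigenvalues hρ.1
    rw [hρt] at h1
    exact_mod_cast h1.symm
  have hmu1 : ∑ j, mu j = 1 := by
    have h1 := trace_eq_sum_eigenvalues hσ.1
    rw [hσt] at h1
    exact_mod_cast h1.symm
  have hρspec : ρ = V * diagonal (fun i => (lam i : ℂ)) * star V := hρ.1.spectral_theorem
  have hσspec : σ = U * diagonal (fun j => (mu j : ℂ)) * star U := hσ.1.spectral_theorem
  have hmid : ∀ j, (star U * ρ * U) j j = ((∑ i, lam i * c i j : ℝ) : ℂ) := by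
    intro j
    have hconj : star U * ρ * U = star W * diagonal (fun i => (lam i : ℂ)) * W := by
      rw [hWstar, hWdef]
      conv_lhs => rw [hρspec]
      simp only [mul_assoc]
    rw [hconj, Matrix.mul_apply]
    push_cast
    refine Finset.sum_congr rfl fun i _ => ?_
    rw [Matrix.mul_diagonal, Matrix.star_apply]
    calc star (W i j) * (lam i : ℂ) * W i j = (lam i : ℂ) * (W i j * star (W i j)) := by ring
      _ = (lam i : ℂ) * ((c i j : ℝ) : ℂ) := by rw [hterm i j]
  have hTσ : ((ρ * matLog σ).trace) =
      ((∑ j, ∑ i, Real.log (mu j) * (lam i * c i j) : ℝ) : ℂ) := by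
    rw [trace_mul_matLog hσ.1 ρ]
    push_cast
    refine Finset.sum_congr rfl fun j _ => ?_
    rw [hmid j]
    push_cast
    rw [Finset.mul_sum]
    try exact Finset.sum_congr rfl fun i _ => by ring
  have hTρ : ((ρ * matLog ρ).trace) = ((∑ i, lam i * Real.log (lam i) : ℝ) : ℂ) :=
    trace_mul_matLog_self hρ.1
  have hsupp : ∀ j, mu j = 0 → ∀ i, lam i * c i j = 0 := by
    intro j hj
    set u : n → ℂ := fun k => U k j with hu
    have hσU : σ *ᵥ u = 0 := by
      have h1 : σ * U = U * diagonal (fun j => (mu j : ℂ)) := by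
        conv_lhs => rw [hσspec]
        rw [mul_assoc, hUU, mul_one]
      funext k
      have h2 : (σ *ᵥ u) k = (σ * U) k j := by
        simp [Matrix.mulVec, Matrix.mul_apply, dotProduct, hu]
      rw [h2, h1, Matrix.mul_diagonal, hj]
      simp
    have hρu : ρ *ᵥ u = 0 := hker u hσU
    have hzero : (star U * ρ * U) j j = 0 := by
      rw [mul_assoc, Matrix.mul_apply]
      apply Finset.sum_eq_zero
      intro k _
      have h3 : (ρ * U) k j = (ρ *ᵥ u) k := by
        simp [Matrix.mul_apply, Matrix.mulVec, dotProduct, hu]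
      rw [h3, hρu]
      simp
    have hs : ((∑ i, lam i * c i j : ℝ) : ℂ) = 0 := by rw [← hmid j]; exact hzero
    have hs' : ∑ i, lam i * c i j = 0 := by exact_mod_cast hs
    intro i
    exact (Finset.sum_eq_zero_iff_of_nonneg
      (fun i _ => mul_nonneg (hlam0 i) (hc0 i j))).mp hs' i (Finset.mem_univ i)
  set g : n → n → ℝ := fun i j =>
    c i j * (lam i * Real.log (lam i) - lam i * Real.log (mu j) - lam i + mu j) with hgdef
  have hmu_lam : ∀ i j, 0 < c i j → (mu j = 0 → lam i = 0) := by
    intro i j hc hm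
    have h1 := hsupp j hm i
    rcases mul_eq_zero.mp h1 with h | h
    · exact h
    · exact absurd h hc.ne'
  have hg0 : ∀ i j, 0 ≤ g i j := by
    intro i j
    rcases eq_or_lt_of_le (hc0 i j) with hc | hc
    · simp [hgdef, ← hc]
    · have hk := (klein_scalar (hlam0 i) (hmu0 j) (hmu_lam i j hc)).1
      exact mul_nonneg hc.le (by linarith)
  have hsum_g : ∑ i, ∑ j, g i j =
      (∑ i, lam i * Real.log (lam i)) - ∑ j, ∑ i, Real.log (mu j) * (lam i * c i j) := by
    have e1 : ∑ i, ∑ j, c i j * (lam i * Real.log (lam i)) = ∑ i, lam i * Real.log (lam i) := by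
      refine Finset.sum_congr rfl fun i _ => ?_
      rw [← Finset.sum_mul, hrow i, one_mul]
    have e2 : ∑ i, ∑ j, c i j * lam i = 1 := by
      have h : ∀ i, ∑ j, c i j * lam i = lam i := fun i => by
        rw [← Finset.sum_mul, hrow i, one_mul]
      rw [Finset.sum_congr rfl fun i _ => h i, hlam1]
    have e3 : ∑ i, ∑ j, c i j * mu j = 1 := by
      rw [Finset.sum_comm]
      have h : ∀ j, ∑ i, c i j * mu j = mu j := fun j => by
        rw [← Finset.sum_mul, hcol j, one_mul]
      rw [Finset.sum_congr rfl fun j _ => h j, hmu1]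
    have e4 : ∑ i, ∑ j, c i j * (lam i * Real.log (mu j)) =
        ∑ j, ∑ i, Real.log (mu j) * (lam i * c i j) := by
      rw [Finset.sum_comm]
      exact Finset.sum_congr rfl fun j _ => Finset.sum_congr rfl fun i _ => by ring
    calc ∑ i, ∑ j, g i j
        = ∑ i, ∑ j, (c i j * (lam i * Real.log (lam i)) - c i j * (lam i * Real.log (mu j))
            - c i j * lam i + c i j * mu j) := by
          exact Finset.sum_congr rfl fun i _ => Finset.sum_congr rfl fun j _ => by
            rw [hgdef]; ring
      _ = (∑ i, ∑ j, c i j * (lam i * Real.log (lam i)))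
            - (∑ i, ∑ j, c i j * (lam i * Real.log (mu j)))
            - (∑ i, ∑ j, c i j * lam i) + (∑ i, ∑ j, c i j * mu j) := by
          simp only [Finset.sum_sub_distrib, Finset.sum_add_distrib]
      _ = _ := by rw [e1, e2, e3, e4]; ring
  have hgsum0 : 0 ≤ ∑ i, ∑ j, g i j :=
    Finset.sum_nonneg fun i _ => Finset.sum_nonneg fun j _ => hg0 i j
  have hTσre : ((ρ * matLog σ).trace).re = ∑ j, ∑ i, Real.log (mu j) * (lam i * c i j) := by
    rw [hTσ, Complex.ofReal_re]
  have hTρre : ((ρ * matLog ρ).trace).re = ∑ i, lam i * Real.log (lam i) := by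
    rw [hTρ, Complex.ofReal_re]
  constructor
  · rw [hTσre, hTρre]
    rw [hsum_g] at hgsum0
    linarith
  · intro hle
    rw [hTρre, hTσre] at hle
    have hzero : ∑ i, ∑ j, g i j = 0 := le_antisymm (by rw [hsum_g]; linarith) hgsum0
    have hg_eq : ∀ i j, g i j = 0 := by
      intro i j
      have h1 := (Finset.sum_eq_zero_iff_of_nonneg
        (fun i _ => Finset.sum_nonneg fun j _ => hg0 i j)).mp hzero i (Finset.mem_univ i)
      exact (Finset.sum_eq_zero_iff_of_nonneg (fun j _ => hg0 i j)).mp h1 j (Finset.mem_univ j)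
    have hEq : ∀ i j, W i j ≠ 0 → lam i = mu j := by
      intro i j hW
      have hc : 0 < c i j := by
        rw [hcdef]
        exact Complex.normSq_pos.mpr hW
      have hinner : lam i * Real.log (lam i) - lam i * Real.log (mu j) - lam i + mu j = 0 := by
        have h1 := hg_eq i j
        rw [hgdef] at h1
        exact (mul_eq_zero.mp h1).resolve_left hc.ne'
      exact (klein_scalar (hlam0 i) (hmu0 j) (hmu_lam i j hc)).2 (by linarith)
    have hDW : diagonal (fun i => (lam i : ℂ)) * W = W * diagonal (fun j => (mu j : ℂ)) := by
      ext i j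
      rw [Matrix.diagonal_mul, Matrix.mul_diagonal]
      rcases eq_or_ne (W i j) 0 with h | h
      · rw [h]; ring
      · rw [hEq i j h]; ring
    have hWU : W * star U = star V := by rw [hWdef, mul_assoc, hUU', mul_one]
    have hVW : V * W = U := by rw [hWdef, ← mul_assoc, hVV', one_mul]
    calc ρ = V * diagonal (fun i => (lam i : ℂ)) * star V := hρspec
      _ = V * (diagonal (fun i => (lam i : ℂ)) * W) * star U := by
          rw [← hWU]; simp only [mul_assoc]
      _ = V * W * (diagonal (fun j => (mu j : ℂ)) * star U) := by
          rw [hDW]; simp only [mul_assoc]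
      _ = U * diagonal (fun j => (mu j : ℂ)) * star U := by rw [hVW]; simp only [mul_assoc]
      _ = σ := hσspec.symm

lemma vNEntropy_eq_neg_trace_re {ρ : Matrix n n ℂ} (h : ρ.IsHermitian) :
    vNEntropy ρ = -((ρ * matLog ρ).trace).re := by
  rw [vNEntropy, dif_pos h, trace_mul_matLog_self h, Complex.ofReal_re]

lemma posSemidef_real_smul {ρ : Matrix n n ℂ} {c : ℝ} (hc : 0 ≤ c) (h : ρ.PosSemidef) :
    ((c : ℂ) • ρ).PosSemidef := by
  refine Matrix.PosSemidef.of_dotProduct_mulVec_nonneg ?_ ?_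
  · show ((c : ℂ) • ρ)ᴴ = (c : ℂ) • ρ
    rw [Matrix.conjTranspose_smul, h.1.eq]
    congr 1
    exact Complex.conj_ofReal c
  · intro x
    rw [Matrix.smul_mulVec, dotProduct_smul, smul_eq_mul]
    have hc' : (0 : ℂ) ≤ (c : ℂ) := by exact_mod_cast hc
    exact mul_nonneg hc' (h.dotProduct_mulVec_nonneg x)

lemma isDensityMatrix_sum {m : ℕ} (w : Fin m → ℝ) (ρ : Fin m → Matrix n n ℂ)
    (hw : ∀ j, 0 ≤ w j) (hw1 : ∑ j, w j = 1) (hρ : ∀ j, IsDensityMatrix (ρ j)) :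
    IsDensityMatrix (∑ j, (w j : ℂ) • ρ j) := by
  constructor
  · refine Finset.sum_induction _ _ (fun a b ha hb => ha.add hb) Matrix.PosSemidef.zero ?_
    intro j _
    exact posSemidef_real_smul (hw j) (hρ j).1
  · rw [Matrix.trace_sum]
    have h1 : ∀ j, ((w j : ℂ) • ρ j).trace = ((w j : ℝ) : ℂ) := by
      intro j
      rw [Matrix.trace_smul, (hρ j).2, smul_eq_mul, mul_one]
    rw [Finset.sum_congr rfl fun j _ => h1 j]
    exact_mod_cast congrArg (fun t : ℝ => (t : ℂ)) hw1

lemma channel_isDensityMatrix {d : ℕ}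
    {Ω : Matrix (Fin d) (Fin d) ℂ → Matrix (Fin d) (Fin d) ℂ} (hΩ : IsChannel Ω)
    {ρ : Matrix (Fin d) (Fin d) ℂ} (h : IsDensityMatrix ρ) : IsDensityMatrix (Ω ρ) := by
  refine ⟨?_, by rw [hΩ.trace_preserving, h.2]⟩
  have h1 : (ρ.submatrix (Prod.snd : Fin 1 × Fin d → Fin d) Prod.snd).PosSemidef :=
    h.1.submatrix _
  have h2 := hΩ.cp 1 _ h1
  have h3 : tensorMap (id : Matrix (Fin 1) (Fin 1) ℂ → Matrix (Fin 1) (Fin 1) ℂ) Ω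
      (ρ.submatrix Prod.snd Prod.snd) = (Matrix.single (0 : Fin 1) 0 1) ⊗ₖ (Ω ρ) := by
    simp only [tensorMap, Fin.sum_univ_one, id_eq, Matrix.submatrix_apply]
    rfl
  have h4 : Ω ρ = ((Matrix.single (0 : Fin 1) 0 1) ⊗ₖ (Ω ρ)).submatrix
      (fun a => ((0 : Fin 1), a)) (fun a => ((0 : Fin 1), a)) := by
    ext a b
    simp [Matrix.submatrix_apply, Matrix.kroneckerMap_apply, Matrix.single_apply_same]
  rw [h3] at h2
  rw [h4]
  exact h2.submatrix _

lemma eigenvalues_sum_one {ρ : Matrix n n ℂ} (h : IsDensityMatrix ρ) :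
    ∑ i, h.1.1.eigenvalues i = 1 := by
  have h1 := trace_eq_sum_eigenvalues h.1.1
  have h2 : ((∑ i, h.1.1.eigenvalues i : ℝ) : ℂ) = ((1 : ℝ) : ℂ) := by
    rw [← h1, h.2]
    norm_num
  exact_mod_cast h2

lemma vNEntropy_nonneg {ρ : Matrix n n ℂ} (h : IsDensityMatrix ρ) : 0 ≤ vNEntropy ρ := by
  rw [vNEntropy, dif_pos h.1.1, neg_nonneg]
  apply Finset.sum_nonpos
  intro i _
  have h0 := h.1.eigenvalues_nonneg i
  have h1 : h.1.1.eigenvalues i ≤ 1 := by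
    rw [← eigenvalues_sum_one h]
    exact Finset.single_le_sum (fun j _ => h.1.eigenvalues_nonneg j) (Finset.mem_univ i)
  nlinarith [Real.log_nonpos h0 h1]

lemma vNEntropy_le_card {ρ : Matrix n n ℂ} (h : IsDensityMatrix ρ) :
    vNEntropy ρ ≤ (Fintype.card n : ℝ) := by
  rw [vNEntropy, dif_pos h.1.1]
  have key : ∀ i, -(h.1.1.eigenvalues i * Real.log (h.1.1.eigenvalues i)) ≤ 1 := by
    intro i
    have h0 := h.1.eigenvalues_nonneg i
    rcases eq_or_lt_of_le h0 with h0' | h0'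
    · rw [← h0']
      norm_num
    · have hlog := Real.log_le_sub_one_of_pos (inv_pos.mpr h0')
      rw [Real.log_inv] at hlog
      have h2 : h.1.1.eigenvalues i * (h.1.1.eigenvalues i)⁻¹ = 1 := mul_inv_cancel₀ h0'.ne'
      nlinarith
  have h2 : ∑ i, -(h.1.1.eigenvalues i * Real.log (h.1.1.eigenvalues i)) ≤ ∑ _i : n, (1 : ℝ) :=
    Finset.sum_le_sum fun i _ => key i
  rw [Finset.sum_neg_distrib] at h2
  simpa using h2

end StmtAux

open GenDep in
/-- the optimal average output of a channel is unique: any two finite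
ensembles achieving the Holevo capacity have the same average output. -/
theorem stmt_15 {d : ℕ}
    (Ω : Matrix (Fin d) (Fin d) ℂ → Matrix (Fin d) (Fin d) ℂ) (hΩ : IsChannel Ω)
    {N N' : ℕ} (w : Fin N → ℝ) (ρ : Fin N → Matrix (Fin d) (Fin d) ℂ)
    (w' : Fin N' → ℝ) (ρ' : Fin N' → Matrix (Fin d) (Fin d) ℂ)
    (hw : ∀ j, 0 < w j) (hw1 : ∑ j, w j = 1) (hρ : ∀ j, IsDensityMatrix (ρ j))
    (hw' : ∀ i, 0 < w' i) (hw'1 : ∑ i, w' i = 1) (hρ' : ∀ i, IsDensityMatrix (ρ' i))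
    (hach : vNEntropy (Ω (∑ j, (w j : ℂ) • ρ j)) - ∑ j, w j * vNEntropy (Ω (ρ j)) =
      holevoCapacity Ω)
    (hach' : vNEntropy (Ω (∑ i, (w' i : ℂ) • ρ' i)) - ∑ i, w' i * vNEntropy (Ω (ρ' i)) =
      holevoCapacity Ω) :
    Ω (∑ j, (w j : ℂ) • ρ j) = Ω (∑ i, (w' i : ℂ) • ρ' i) := by
  classical
  set Ain : Matrix (Fin d) (Fin d) ℂ := ∑ j, (w j : ℂ) • ρ j with hAin
  set Bin : Matrix (Fin d) (Fin d) ℂ := ∑ i, (w' i : ℂ) • ρ' i with hBin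
  have hAind : IsDensityMatrix Ain := StmtAux.isDensityMatrix_sum w ρ (fun j => (hw j).le) hw1 hρ
  have hBind : IsDensityMatrix Bin :=
    StmtAux.isDensityMatrix_sum w' ρ' (fun i => (hw' i).le) hw'1 hρ'
  have hA : IsDensityMatrix (Ω Ain) := StmtAux.channel_isDensityMatrix hΩ hAind
  have hB : IsDensityMatrix (Ω Bin) := StmtAux.channel_isDensityMatrix hΩ hBind
  set w2 : Fin (N + N') → ℝ := Fin.append (fun j => w j / 2) (fun i => w' i / 2) with hw2
  set ρ2 : Fin (N + N') → Matrix (Fin d) (Fin d) ℂ := Fin.append ρ ρ' with hρ2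
  have hw2pos : ∀ k, 0 < w2 k := by
    refine Fin.addCases ?_ ?_
    · intro j
      rw [hw2, Fin.append_left]
      exact half_pos (hw j)
    · intro i
      rw [hw2, Fin.append_right]
      exact half_pos (hw' i)
  have hw2sum : ∑ k, w2 k = 1 := by
    rw [hw2, Fin.sum_univ_add]
    simp only [Fin.append_left, Fin.append_right]
    rw [← Finset.sum_div, ← Finset.sum_div, hw1, hw'1]
    norm_num
  have hρ2d : ∀ k, IsDensityMatrix (ρ2 k) := by
    refine Fin.addCases ?_ ?_
    · intro j
      rw [hρ2, Fin.append_left]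
      exact hρ j
    · intro i
      rw [hρ2, Fin.append_right]
      exact hρ' i
  set Min : Matrix (Fin d) (Fin d) ℂ := ∑ k, (w2 k : ℂ) • ρ2 k with hMin
  have hMineq : Min = (2⁻¹ : ℂ) • Ain + (2⁻¹ : ℂ) • Bin := by
    rw [hMin, Fin.sum_univ_add]
    simp only [hw2, hρ2, Fin.append_left, Fin.append_right]
    rw [hAin, hBin, Finset.smul_sum, Finset.smul_sum]
    congr 1
    · refine Finset.sum_congr rfl fun j _ => ?_
      rw [smul_smul]
      congr 1
      push_cast
      ring
    · refine Finset.sum_congr rfl fun i _ => ?_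
      rw [smul_smul]
      congr 1
      push_cast
      ring
  have hMind : IsDensityMatrix Min :=
    StmtAux.isDensityMatrix_sum w2 ρ2 (fun k => (hw2pos k).le) hw2sum hρ2d
  have hM : IsDensityMatrix (Ω Min) := StmtAux.channel_isDensityMatrix hΩ hMind
  have hMout : Ω Min = (2⁻¹ : ℂ) • Ω Ain + (2⁻¹ : ℂ) • Ω Bin := by
    rw [hMineq, hΩ.map_add, hΩ.map_smul, hΩ.map_smul]
  -- the capacity set
  set S : Set ℝ := {x | ∃ (m : ℕ) (v : Fin m → ℝ) (τ : Fin m → Matrix (Fin d) (Fin d) ℂ),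
    (∀ j, 0 < v j) ∧ (∑ j, v j = 1) ∧ (∀ j, IsDensityMatrix (τ j)) ∧
    x = vNEntropy (Ω (∑ j, (v j : ℂ) • τ j)) - ∑ j, v j * vNEntropy (Ω (τ j))} with hS
  have hbdd : BddAbove S := by
    refine ⟨(Fintype.card (Fin d) : ℝ), ?_⟩
    rintro x ⟨m, v, τ, hv, hv1, hτ, rfl⟩
    have h1 : vNEntropy (Ω (∑ j, (v j : ℂ) • τ j)) ≤ (Fintype.card (Fin d) : ℝ) :=
      StmtAux.vNEntropy_le_card (StmtAux.channel_isDensityMatrix hΩ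
        (StmtAux.isDensityMatrix_sum v τ (fun j => (hv j).le) hv1 hτ))
    have h2 : 0 ≤ ∑ j, v j * vNEntropy (Ω (τ j)) :=
      Finset.sum_nonneg fun j _ => mul_nonneg (hv j).le
        (StmtAux.vNEntropy_nonneg (StmtAux.channel_isDensityMatrix hΩ (hτ j)))
    linarith
  have hmem : (vNEntropy (Ω Min) - ∑ k, w2 k * vNEntropy (Ω (ρ2 k))) ∈ S :=
    ⟨N + N', w2, ρ2, hw2pos, hw2sum, hρ2d, by rw [hMin]⟩
  have hle : vNEntropy (Ω Min) - ∑ k, w2 k * vNEntropy (Ω (ρ2 k)) ≤ holevoCapacity Ω :=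
    le_csSup hbdd hmem
  have hsplit : ∑ k, w2 k * vNEntropy (Ω (ρ2 k)) =
      (∑ j, w j * vNEntropy (Ω (ρ j))) / 2 + (∑ i, w' i * vNEntropy (Ω (ρ' i))) / 2 := by
    rw [hw2, hρ2, Fin.sum_univ_add]
    simp only [Fin.append_left, Fin.append_right]
    rw [Finset.sum_div, Finset.sum_div]
    congr 1
    · exact Finset.sum_congr rfl fun j _ => by ring
    · exact Finset.sum_congr rfl fun i _ => by ring
  have hSM : vNEntropy (Ω Min) ≤ (vNEntropy (Ω Ain) + vNEntropy (Ω Bin)) / 2 := by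
    rw [hsplit] at hle
    linarith [hach, hach', hle]
  -- kernel conditions
  have h2c : (0 : ℂ) ≤ (2⁻¹ : ℂ) := by
    rw [show ((2 : ℂ))⁻¹ = ((2⁻¹ : ℝ) : ℂ) by norm_num]
    exact_mod_cast (by norm_num : (0 : ℝ) ≤ 2⁻¹)
  have hkergen : ∀ (C : Matrix (Fin d) (Fin d) ℂ), C.PosSemidef →
      (∀ x, star x ⬝ᵥ (Ω Min) *ᵥ x =
        2⁻¹ * (star x ⬝ᵥ C *ᵥ x) + 2⁻¹ * (star x ⬝ᵥ ((Ω Min - (2⁻¹:ℂ) • C) * 2) *ᵥ x)) →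
      True := fun _ _ _ => trivial
  have hkerA : ∀ x, (Ω Min) *ᵥ x = 0 → (Ω Ain) *ᵥ x = 0 := by
    intro x hx
    have ha := hA.1.dotProduct_mulVec_nonneg x
    have hb := hB.1.dotProduct_mulVec_nonneg x
    have hdot : star x ⬝ᵥ (Ω Min) *ᵥ x = 0 := by rw [hx, dotProduct_zero]
    rw [hMout, Matrix.add_mulVec, Matrix.smul_mulVec, Matrix.smul_mulVec,
      dotProduct_add, dotProduct_smul, dotProduct_smul, smul_eq_mul, smul_eq_mul] at hdot
    have hb' : (0 : ℂ) ≤ 2⁻¹ * (star x ⬝ᵥ (Ω Bin) *ᵥ x) := mul_nonneg h2c hb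
    have ha' : (0 : ℂ) ≤ 2⁻¹ * (star x ⬝ᵥ (Ω Ain) *ᵥ x) := mul_nonneg h2c ha
    have h3 : 2⁻¹ * (star x ⬝ᵥ (Ω Ain) *ᵥ x) = 0 :=
      le_antisymm (by rw [← hdot]; exact le_add_of_nonneg_right hb') ha'
    have h4 : star x ⬝ᵥ (Ω Ain) *ᵥ x = 0 := by
      rcases mul_eq_zero.mp h3 with h | h
      · norm_num at h
      · exact h
    exact (hA.1.dotProduct_mulVec_zero_iff x).mp h4
  have hkerB : ∀ x, (Ω Min) *ᵥ x = 0 → (Ω Bin) *ᵥ x = 0 := by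
    intro x hx
    have ha := hA.1.dotProduct_mulVec_nonneg x
    have hb := hB.1.dotProduct_mulVec_nonneg x
    have hdot : star x ⬝ᵥ (Ω Min) *ᵥ x = 0 := by rw [hx, dotProduct_zero]
    rw [hMout, Matrix.add_mulVec, Matrix.smul_mulVec, Matrix.smul_mulVec,
      dotProduct_add, dotProduct_smul, dotProduct_smul, smul_eq_mul, smul_eq_mul] at hdot
    have hb' : (0 : ℂ) ≤ 2⁻¹ * (star x ⬝ᵥ (Ω Bin) *ᵥ x) := mul_nonneg h2c hb
    have ha' : (0 : ℂ) ≤ 2⁻¹ * (star x ⬝ᵥ (Ω Ain) *ᵥ x) := mul_nonneg h2c ha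
    have h3 : 2⁻¹ * (star x ⬝ᵥ (Ω Bin) *ᵥ x) = 0 :=
      le_antisymm (by rw [← hdot]; exact le_add_of_nonneg_left ha') hb'
    have h4 : star x ⬝ᵥ (Ω Bin) *ᵥ x = 0 := by
      rcases mul_eq_zero.mp h3 with h | h
      · norm_num at h
      · exact h
    exact (hB.1.dotProduct_mulVec_zero_iff x).mp h4
  have hKA := StmtAux.klein_matrix hA.1 hA.2 hM.1 hM.2 hkerA
  have hKB := StmtAux.klein_matrix hB.1 hB.2 hM.1 hM.2 hkerB
  have hSA : vNEntropy (Ω Ain) = -((Ω Ain * matLog (Ω Ain)).trace).re :=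
    StmtAux.vNEntropy_eq_neg_trace_re hA.1.1
  have hSB : vNEntropy (Ω Bin) = -((Ω Bin * matLog (Ω Bin)).trace).re :=
    StmtAux.vNEntropy_eq_neg_trace_re hB.1.1
  have hSMeq : vNEntropy (Ω Min) =
      -(2⁻¹ * ((Ω Ain * matLog (Ω Min)).trace).re + 2⁻¹ * ((Ω Bin * matLog (Ω Min)).trace).re) := by
    rw [StmtAux.vNEntropy_eq_neg_trace_re hM.1.1]
    congr 1
    have h1 : Ω Min * matLog (Ω Min) =
        (2⁻¹ : ℂ) • (Ω Ain * matLog (Ω Min)) + (2⁻¹ : ℂ) • (Ω Bin * matLog (Ω Min)) := by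
      rw [hMout, Matrix.add_mul, Matrix.smul_mul, Matrix.smul_mul]
    rw [h1, Matrix.trace_add, Matrix.trace_smul, Matrix.trace_smul, smul_eq_mul, smul_eq_mul,
      Complex.add_re, show ((2 : ℂ))⁻¹ = ((2⁻¹ : ℝ) : ℂ) by norm_num,
      Complex.re_ofReal_mul, Complex.re_ofReal_mul]
  have e1 : Ω Ain = Ω Min := by
    apply hKA.2
    rw [hSMeq, hSA, hSB] at hSM
    have g1 := hKA.1
    have g2 := hKB.1
    linarith
  have e2 : Ω Bin = Ω Min := by
    apply hKB.2
    rw [hSMeq, hSA, hSB] at hSM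
    have g1 := hKA.1
    have g2 := hKB.1
    linarith
  rw [e1, e2]
end
end
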